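/- arXiv:1407.6838 — 5 statements merged into one kernel-verified Lean document; each statement's English description precedes it below -/
import Mathlib

section
/- Let F ∈ ℂ[x,y]_{2(d-2)} have nonzero catalecticant, and let f₁, f₂ be a basis of F^⊥ ∩ ℂ[x,y]_{d-1}. Then f₁ and f₂ have no common zero in ℂ² other than the origin (equivalently, Res(f₁,f₂) ≠ 0). -/
open MvPolynomial

/-- The differential operator `∂^m = ∏ᵢ (∂/∂xᵢ)^(mᵢ)`. -/
noncomputable def diffOp {n : ℕ} (m : Fin n →₀ ℕ) : Module.End ℂ (MvPolynomial (Fin n) ℂ) :=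
  ((List.finRange n).map fun i => ((pderiv i).toLinearMap : Module.End ℂ (MvPolynomial (Fin n) ℂ)) ^ (m i)).prod

/-- The polar (differentiation) action `h ∘ F = h(∂/∂y₁, …, ∂/∂yₙ) F`,
as a linear map in `h`.  `F^⊥ = ker (polarLM F)`. -/
noncomputable def polarLM {n : ℕ} (F : MvPolynomial (Fin n) ℂ) :
    MvPolynomial (Fin n) ℂ →ₗ[ℂ] MvPolynomial (Fin n) ℂ where
  toFun h := ∑ m ∈ h.support, h.coeff m • diffOp m F
  map_add' a b := by
    have key : ∀ (g : MvPolynomial (Fin n) ℂ) (S : Finset ((Fin n) →₀ ℕ)), g.support ⊆ S →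
        ∑ m ∈ g.support, g.coeff m • diffOp m F = ∑ m ∈ S, g.coeff m • diffOp m F := by
      intro g S hS
      refine Finset.sum_subset hS ?_
      intro m _ hm
      rw [MvPolynomial.notMem_support_iff.mp hm, zero_smul]
    show ∑ m ∈ (a + b).support, (a+b).coeff m • diffOp m F = (∑ m ∈ a.support, a.coeff m • diffOp m F) + ∑ m ∈ b.support, b.coeff m • diffOp m F
    set S := (a + b).support ∪ a.support ∪ b.support with hs
    rw [key (a + b) S (by intro x hx; simp [hs, hx]),
      key a S (by intro x hx; simp [hs, hx]), key b S (by intro x hx; simp [hs, hx])]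
    simp [MvPolynomial.coeff_add, add_smul, Finset.sum_add_distrib]
  map_smul' c h := by
    have key : ∀ (g : MvPolynomial (Fin n) ℂ) (S : Finset ((Fin n) →₀ ℕ)), g.support ⊆ S →
        ∑ m ∈ g.support, g.coeff m • diffOp m F = ∑ m ∈ S, g.coeff m • diffOp m F := by
      intro g S hS
      refine Finset.sum_subset hS ?_
      intro m _ hm
      rw [MvPolynomial.notMem_support_iff.mp hm, zero_smul]
    show ∑ m ∈ (c • h).support, (c • h).coeff m • diffOp m F = (RingHom.id ℂ) c • ∑ m ∈ h.support, h.coeff m • diffOp m F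
    rw [key (c • h) h.support (MvPolynomial.support_smul), Finset.smul_sum]
    simp [MvPolynomial.coeff_smul, mul_smul]

/-- The catalecticant of a binary form `F = ∑ C(2N,i) aᵢ x^(2N-i) y^i` of even degree `2N`:
the determinant of the `(N+1)×(N+1)` Hankel matrix `(a_(i+j))`. -/
noncomputable def catal (N : ℕ) (F : MvPolynomial (Fin 2) ℂ) : ℂ :=
  (Matrix.of fun i j : Fin (N + 1) =>
    F.coeff (Finsupp.single 0 (2 * N - ((i : ℕ) + j)) + Finsupp.single 1 ((i : ℕ) + j))
      / (Nat.choose (2 * N) ((i : ℕ) + j) : ℂ)).det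


noncomputable def mid (p r : ℕ) : Fin 2 →₀ ℕ := Finsupp.single 0 p + Finsupp.single 1 r

@[simp] lemma mid_apply0 (p r : ℕ) : mid p r 0 = p := by simp [mid, Finsupp.single_apply]
@[simp] lemma mid_apply1 (p r : ℕ) : mid p r 1 = r := by simp [mid, Finsupp.single_apply]

lemma fin2_decomp (m : Fin 2 →₀ ℕ) : m = mid (m 0) (m 1) := by
  ext i; fin_cases i <;> simp

lemma mid_inj {p r u v : ℕ} (h : mid p r = mid u v) : p = u ∧ r = v :=
  ⟨by simpa using congrArg (fun f => f 0) h, by simpa using congrArg (fun f => f 1) h⟩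

lemma weight_mid (p r : ℕ) : (Finsupp.weight 1) (mid p r) = p + r := by
  simp [mid, Finsupp.weight_apply, Finsupp.sum_add_index, Finsupp.sum_single_index]

lemma degree_mid (p r : ℕ) : (mid p r).degree = p + r := by
  rw [Finsupp.degree_eq_weight_one]; exact weight_mid p r

lemma homog_coeff_ne {k : ℕ} {h : MvPolynomial (Fin 2) ℂ} (hh : h.IsHomogeneous k) {p r : ℕ}
    (hc : h.coeff (mid p r) ≠ 0) : p + r = k := by
  have := hh hc; rwa [weight_mid] at this

lemma homog_coeff_zero {k : ℕ} {h : MvPolynomial (Fin 2) ℂ} (hh : h.IsHomogeneous k) {p r : ℕ}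
    (hc : p + r ≠ k) : h.coeff (mid p r) = 0 := by
  by_contra h0; exact hc (homog_coeff_ne hh h0)

lemma diffOp_eq (m : Fin 2 →₀ ℕ) :
    diffOp m = ((pderiv 0).toLinearMap : Module.End ℂ (MvPolynomial (Fin 2) ℂ)) ^ (m 0) *
      ((pderiv 1).toLinearMap : Module.End ℂ (MvPolynomial (Fin 2) ℂ)) ^ (m 1) := by
  have : List.finRange 2 = [0, 1] := rfl
  simp [diffOp, this]

lemma pow_pderiv0_mon (s p r : ℕ) (c : ℂ) :
    (((pderiv 0).toLinearMap : Module.End ℂ (MvPolynomial (Fin 2) ℂ)) ^ s) (monomial (mid p r) c)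
      = monomial (mid (p - s) r) (c * (p.descFactorial s : ℂ)) := by
  induction s with
  | zero => simp
  | succ s ih =>
    rw [pow_succ', Module.End.mul_apply, ih]
    have h1 : mid (p - s) r - Finsupp.single 0 1 = mid (p - (s+1)) r := by
      ext i; fin_cases i <;> simp [mid, Finsupp.single_apply, Finsupp.tsub_apply] <;> omega
    rw [Derivation.coeFn_coe, pderiv_monomial, h1, mid_apply0, Nat.descFactorial_succ]
    push_cast
    ring_nf

lemma pow_pderiv1_mon (t p r : ℕ) (c : ℂ) :
    (((pderiv 1).toLinearMap : Module.End ℂ (MvPolynomial (Fin 2) ℂ)) ^ t) (monomial (mid p r) c)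
      = monomial (mid p (r - t)) (c * (r.descFactorial t : ℂ)) := by
  induction t with
  | zero => simp
  | succ t ih =>
    rw [pow_succ', Module.End.mul_apply, ih]
    have h1 : mid p (r - t) - Finsupp.single 1 1 = mid p (r - (t+1)) := by
      ext i; fin_cases i <;> simp [mid, Finsupp.single_apply, Finsupp.tsub_apply] <;> omega
    rw [Derivation.coeFn_coe, pderiv_monomial, h1, mid_apply1, Nat.descFactorial_succ]
    push_cast
    ring_nf

lemma diffOp_mon (s t p r : ℕ) (c : ℂ) :
    diffOp (mid s t) (monomial (mid p r) c)
      = monomial (mid (p - s) (r - t)) (c * (p.descFactorial s : ℂ) * (r.descFactorial t : ℂ)) := by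
  rw [diffOp_eq, Module.End.mul_apply, mid_apply0, mid_apply1, pow_pderiv1_mon, pow_pderiv0_mon]
  congr 1
  ring

lemma polar_apply (F h : MvPolynomial (Fin 2) ℂ) :
    polarLM F h = ∑ m ∈ h.support, h.coeff m • diffOp m F := rfl

lemma polar_monomial (F : MvPolynomial (Fin 2) ℂ) (m : Fin 2 →₀ ℕ) (c : ℂ) :
    polarLM F (monomial m c) = c • diffOp m F := by
  rcases eq_or_ne c 0 with rfl | hc
  · simp [polar_apply]
  · rw [polar_apply, support_monomial, if_neg hc, Finset.sum_singleton, coeff_monomial,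
      if_pos rfl]

lemma pd_comm (f : MvPolynomial (Fin 2) ℂ) :
    pderiv 0 (pderiv 1 f) = pderiv 1 (pderiv 0 f) := by
  induction f using MvPolynomial.induction_on' with
  | add p q hp hq => simp [hp, hq]
  | monomial m c =>
    obtain ⟨u, v, rfl⟩ : ∃ u v, m = mid u v := ⟨m 0, m 1, fin2_decomp m⟩
    have s0 : ∀ p r : ℕ, mid p r - Finsupp.single 0 1 = mid (p-1) r := by
      intro p r; ext i; fin_cases i <;> simp [mid, Finsupp.single_apply, Finsupp.tsub_apply]
    have s1 : ∀ p r : ℕ, mid p r - Finsupp.single 1 1 = mid p (r-1) := by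
      intro p r; ext i; fin_cases i <;> simp [mid, Finsupp.single_apply, Finsupp.tsub_apply]
    rw [pderiv_monomial, pderiv_monomial, pderiv_monomial, pderiv_monomial, s0, s1, s0, s1,
      mid_apply0, mid_apply1, mid_apply0, mid_apply1]
    congr 1
    ring

lemma diffOp_add_single (i : Fin 2) (m : Fin 2 →₀ ℕ) :
    diffOp (Finsupp.single i 1 + m) = (pderiv i).toLinearMap * diffOp m := by
  have hc : Commute ((pderiv (0 : Fin 2)).toLinearMap : Module.End ℂ (MvPolynomial (Fin 2) ℂ))
      ((pderiv 1).toLinearMap) := by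
    apply LinearMap.ext
    intro f
    simpa [Module.End.mul_apply] using pd_comm f
  fin_cases i
  · show diffOp (Finsupp.single (0 : Fin 2) 1 + m) = (pderiv (0 : Fin 2)).toLinearMap * diffOp m
    have hm : Finsupp.single (0 : Fin 2) 1 + m = mid (m 0 + 1) (m 1) := by
      ext i; fin_cases i <;> simp [mid, Finsupp.single_apply] <;> omega
    rw [hm, diffOp_eq, diffOp_eq, mid_apply0, mid_apply1, pow_succ', mul_assoc]
  · show diffOp (Finsupp.single (1 : Fin 2) 1 + m) = (pderiv (1 : Fin 2)).toLinearMap * diffOp m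
    have hm : Finsupp.single (1 : Fin 2) 1 + m = mid (m 0) (m 1 + 1) := by
      ext i; fin_cases i <;> simp [mid, Finsupp.single_apply] <;> omega
    rw [hm, diffOp_eq, diffOp_eq, mid_apply0, mid_apply1, pow_succ']
    rw [← mul_assoc, (hc.pow_left _).eq, mul_assoc]

lemma polar_X_mul (F : MvPolynomial (Fin 2) ℂ) (i : Fin 2) (h : MvPolynomial (Fin 2) ℂ) :
    polarLM F (X i * h) = pderiv i (polarLM F h) := by
  induction h using MvPolynomial.induction_on' with
  | add p q hp hq => rw [mul_add, map_add, hp, hq, map_add, map_add]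
  | monomial m c =>
    have hX : (X i : MvPolynomial (Fin 2) ℂ) * monomial m c
        = monomial (Finsupp.single i 1 + m) c := by
      rw [X, monomial_mul, one_mul]
    rw [hX, polar_monomial, polar_monomial, diffOp_add_single, Module.End.mul_apply,
      ← LinearMap.map_smul, Derivation.coeFn_coe]

lemma polar_lin_mul (F : MvPolynomial (Fin 2) ℂ) (a b : ℂ) (g : MvPolynomial (Fin 2) ℂ) :
    polarLM F ((C b * X 0 - C a * X 1) * g)
      = b • pderiv 0 (polarLM F g) + (-a) • pderiv 1 (polarLM F g) := by
  rw [sub_mul, map_sub, mul_assoc, mul_assoc, ← smul_eq_C_mul, ← smul_eq_C_mul,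
    map_smul, map_smul, polar_X_mul, polar_X_mul]
  rw [sub_eq_add_neg, ← neg_smul]

lemma coeff_pderiv0 (h : MvPolynomial (Fin 2) ℂ) (p r : ℕ) :
    (pderiv 0 h).coeff (mid p r) = ((p : ℂ) + 1) * h.coeff (mid (p+1) r) := by
  induction h using MvPolynomial.induction_on' with
  | add a b ha hb => simp only [map_add, coeff_add, ha, hb]; ring
  | monomial m c =>
    obtain ⟨u, v, rfl⟩ : ∃ u v, m = mid u v := ⟨m 0, m 1, fin2_decomp m⟩
    have hsub : mid u v - Finsupp.single 0 1 = mid (u-1) v := by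
      ext i; fin_cases i <;> simp [mid, Finsupp.single_apply, Finsupp.tsub_apply]
    rw [pderiv_monomial, hsub, mid_apply0, coeff_monomial, coeff_monomial]
    by_cases h1 : u = p + 1 ∧ v = r
    · obtain ⟨rfl, rfl⟩ := h1
      rw [if_pos rfl, if_pos (by rw [Nat.add_sub_cancel])]
      push_cast; ring
    · rw [if_neg (fun hh => h1 ⟨(mid_inj hh).1, (mid_inj hh).2⟩)]
      split_ifs with h2
      · obtain ⟨hu, hv⟩ := mid_inj h2
        have hu0 : u = 0 := by omega
        simp [hu0]
      · simp

lemma coeff_pderiv1 (h : MvPolynomial (Fin 2) ℂ) (p r : ℕ) :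
    (pderiv 1 h).coeff (mid p r) = ((r : ℂ) + 1) * h.coeff (mid p (r+1)) := by
  induction h using MvPolynomial.induction_on' with
  | add a b ha hb => simp only [map_add, coeff_add, ha, hb]; ring
  | monomial m c =>
    obtain ⟨u, v, rfl⟩ : ∃ u v, m = mid u v := ⟨m 0, m 1, fin2_decomp m⟩
    have hsub : mid u v - Finsupp.single 1 1 = mid u (v-1) := by
      ext i; fin_cases i <;> simp [mid, Finsupp.single_apply, Finsupp.tsub_apply]
    rw [pderiv_monomial, hsub, mid_apply1, coeff_monomial, coeff_monomial]
    by_cases h1 : u = p ∧ v = r + 1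
    · obtain ⟨rfl, rfl⟩ := h1
      rw [if_pos rfl, if_pos (by rw [Nat.add_sub_cancel])]
      push_cast; ring
    · rw [if_neg (fun hh => h1 ⟨(mid_inj hh).1, (mid_inj hh).2⟩)]
      split_ifs with h2
      · obtain ⟨hu, hv⟩ := mid_inj h2
        have hv0 : v = 0 := by omega
        simp [hv0]
      · simp

lemma pderiv0_homog {k : ℕ} {h : MvPolynomial (Fin 2) ℂ} (hh : h.IsHomogeneous k) :
    (pderiv 0 h).IsHomogeneous (k - 1) := by
  intro d hd
  rw [fin2_decomp d] at hd ⊢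
  rw [weight_mid]
  rw [coeff_pderiv0] at hd
  have h2 : h.coeff (mid (d 0 + 1) (d 1)) ≠ 0 := by
    intro h0; rw [h0, mul_zero] at hd; exact hd rfl
  have := homog_coeff_ne hh h2
  omega

lemma pderiv1_homog {k : ℕ} {h : MvPolynomial (Fin 2) ℂ} (hh : h.IsHomogeneous k) :
    (pderiv 1 h).IsHomogeneous (k - 1) := by
  intro d hd
  rw [fin2_decomp d] at hd ⊢
  rw [weight_mid]
  rw [coeff_pderiv1] at hd
  have h2 : h.coeff (mid (d 0) (d 1 + 1)) ≠ 0 := by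
    intro h0; rw [h0, mul_zero] at hd; exact hd rfl
  have := homog_coeff_ne hh h2
  omega

lemma pow_pderiv0_homog (s : ℕ) {k : ℕ} {h : MvPolynomial (Fin 2) ℂ} (hh : h.IsHomogeneous k) :
    ((((pderiv 0).toLinearMap : Module.End ℂ (MvPolynomial (Fin 2) ℂ)) ^ s) h).IsHomogeneous (k - s) := by
  induction s with
  | zero => simpa using hh
  | succ s ih =>
    rw [pow_succ', Module.End.mul_apply, Derivation.coeFn_coe,
      show k - (s+1) = k - s - 1 from by omega]
    exact pderiv0_homog ih

lemma pow_pderiv1_homog (t : ℕ) {k : ℕ} {h : MvPolynomial (Fin 2) ℂ} (hh : h.IsHomogeneous k) :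
    ((((pderiv 1).toLinearMap : Module.End ℂ (MvPolynomial (Fin 2) ℂ)) ^ t) h).IsHomogeneous (k - t) := by
  induction t with
  | zero => simpa using hh
  | succ t ih =>
    rw [pow_succ', Module.End.mul_apply, Derivation.coeFn_coe,
      show k - (t+1) = k - t - 1 from by omega]
    exact pderiv1_homog ih

lemma diffOp_homog {k : ℕ} {h : MvPolynomial (Fin 2) ℂ} (hh : h.IsHomogeneous k) (s t : ℕ) :
    (diffOp (mid s t) h).IsHomogeneous (k - s - t) := by
  rw [diffOp_eq, Module.End.mul_apply, mid_apply0, mid_apply1,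
    show k - s - t = k - t - s from by omega]
  exact pow_pderiv0_homog s (pow_pderiv1_homog t hh)

lemma polar_homog {k n : ℕ} {F g : MvPolynomial (Fin 2) ℂ} (hF : F.IsHomogeneous (k + n))
    (hg : g.IsHomogeneous k) : (polarLM F g).IsHomogeneous n := by
  rw [polar_apply]
  apply MvPolynomial.IsHomogeneous.sum
  intro m hm
  have hco : g.coeff m ≠ 0 := mem_support_iff.mp hm
  have hdeg : m 0 + m 1 = k := by
    rw [fin2_decomp m] at hco; exact homog_coeff_ne hg hco
  have h1 : diffOp m F = diffOp (mid (m 0) (m 1)) F := by rw [← fin2_decomp]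
  rw [h1, smul_eq_C_mul]
  have h2 := (isHomogeneous_C (Fin 2) (g.coeff m)).mul (diffOp_homog hF (m 0) (m 1))
  rw [show (0 + (k + n - (m 0) - (m 1))) = n from by omega] at h2
  exact h2

lemma sum_homog {k : ℕ} {h : MvPolynomial (Fin 2) ℂ} (hh : h.IsHomogeneous k)
    {M : Type*} [AddCommMonoid M] (φ : (Fin 2 →₀ ℕ) → M)
    (hz : ∀ m, h.coeff m = 0 → φ m = 0) :
    ∑ m ∈ h.support, φ m = ∑ j ∈ Finset.range (k+1), φ (mid (k-j) j) := by
  have hsub : h.support ⊆ (Finset.range (k+1)).image (fun j => mid (k-j) j) := by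
    intro m hm
    have hco : h.coeff m ≠ 0 := mem_support_iff.mp hm
    have hdeg : m 0 + m 1 = k := by
      rw [fin2_decomp m] at hco; exact homog_coeff_ne hh hco
    rw [Finset.mem_image]
    exact ⟨m 1, Finset.mem_range.mpr (by omega),
      by rw [show k - m 1 = m 0 by omega, ← fin2_decomp]⟩
  rw [Finset.sum_subset hsub (fun m _ hm => hz m (notMem_support_iff.mp hm))]
  rw [Finset.sum_image]
  intro j hj j' hj' hjj
  have := (mid_inj hjj).2
  omega

lemma homog_as_sum {k : ℕ} {h : MvPolynomial (Fin 2) ℂ} (hh : h.IsHomogeneous k) :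
    h = ∑ j ∈ Finset.range (k+1), monomial (mid (k-j) j) (h.coeff (mid (k-j) j)) := by
  conv_lhs => rw [← support_sum_monomial_coeff h]
  rw [sum_homog hh (fun m => monomial m (h.coeff m)) (fun m hm => by rw [hm, map_zero])]

lemma eval_mid (x : Fin 2 → ℂ) (p r : ℕ) (c : ℂ) :
    eval x (monomial (mid p r) c) = c * x 0 ^ p * x 1 ^ r := by
  rw [eval_monomial]
  have : ((mid p r).prod fun i e => x i ^ e) = ∏ i : Fin 2, x i ^ (mid p r i) := by
    apply Finsupp.prod_fintype
    intro i; exact pow_zero _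
  rw [this, Fin.prod_univ_two, mid_apply0, mid_apply1, mul_assoc]

lemma eval_homog {k : ℕ} {h : MvPolynomial (Fin 2) ℂ} (hh : h.IsHomogeneous k) (x : Fin 2 → ℂ) :
    eval x h = ∑ j ∈ Finset.range (k+1), h.coeff (mid (k-j) j) * x 0 ^ (k-j) * x 1 ^ j := by
  conv_lhs => rw [homog_as_sum hh]
  rw [map_sum]
  exact Finset.sum_congr rfl fun j _ => eval_mid x _ _ _

lemma coeff_sum_mid (k : ℕ) (e : ℕ → ℂ) (u v : ℕ) :
    (∑ j ∈ Finset.range k, monomial (mid (k-1-j) j) (e j)).coeff (mid u v)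
      = if v < k ∧ u = k-1-v then e v else 0 := by
  rw [coeff_sum]
  by_cases hv : v < k ∧ u = k-1-v
  · rw [if_pos hv]
    rw [Finset.sum_eq_single v]
    · rw [coeff_monomial, if_pos (by rw [hv.2])]
    · intro j hj hjv
      rw [coeff_monomial, if_neg (fun hh => hjv (mid_inj hh).2)]
    · intro hv'
      exact absurd (Finset.mem_range.mpr hv.1) hv'
  · rw [if_neg hv]
    apply Finset.sum_eq_zero
    intro j hj
    rw [coeff_monomial, if_neg]
    intro hh
    obtain ⟨h1, h2⟩ := mid_inj hh
    exact hv ⟨h2 ▸ Finset.mem_range.mp hj, by omega⟩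

lemma homog_eq_zero {N : ℕ} {h : MvPolynomial (Fin 2) ℂ} (hh : h.IsHomogeneous N)
    (he : ∀ j, j ≤ N → h.coeff (mid (N-j) j) = 0) : h = 0 := by
  apply MvPolynomial.eq_zero_iff.mpr
  intro d
  rw [fin2_decomp d]
  by_cases hd : d 0 + d 1 = N
  · have := he (d 1) (by omega)
    rwa [show N - d 1 = d 0 from by omega] at this
  · exact homog_coeff_zero hh hd

lemma ker_D_coeff {α β : ℂ} {h : MvPolynomial (Fin 2) ℂ}
    (hD : α • pderiv 0 h + β • pderiv 1 h = 0) (p r : ℕ) :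
    α * ((p : ℂ) + 1) * h.coeff (mid (p+1) r) + β * ((r : ℂ) + 1) * h.coeff (mid p (r+1)) = 0 := by
  have := congrArg (fun q => MvPolynomial.coeff (mid p r) q) hD
  simp only [coeff_add, coeff_smul, coeff_zero, smul_eq_mul] at this
  rw [coeff_pderiv0, coeff_pderiv1] at this
  linear_combination this

lemma ker_D_zero_left {α β : ℂ} (hα : α ≠ 0) {N : ℕ} {h : MvPolynomial (Fin 2) ℂ}
    (hh : h.IsHomogeneous N) (hD : α • pderiv 0 h + β • pderiv 1 h = 0)
    (h0 : h.coeff (mid 0 N) = 0) : h = 0 := by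
  apply homog_eq_zero hh
  have key : ∀ t, t ≤ N → h.coeff (mid t (N - t)) = 0 := by
    intro t
    induction t with
    | zero => intro _; simpa using h0
    | succ t ih =>
      intro ht
      have hIH := ih (by omega)
      have hE := ker_D_coeff hD t (N - t - 1)
      have e1 : mid t (N - t - 1 + 1) = mid t (N - t) := by rw [show N - t - 1 + 1 = N - t from by omega]
      rw [e1, hIH, mul_zero, add_zero, mul_eq_zero, mul_eq_zero] at hE
      rcases hE with (hE | hE) | hE
      · exact absurd hE hα
      · exfalso
        have : ((t : ℂ) + 1) ≠ 0 := by
          have : (0:ℝ) < (t:ℝ) + 1 := by positivity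
          intro hc
          have := congrArg Complex.re hc
          simp at this
          linarith
        exact this hE
      · rwa [show N - (t+1) = N - t - 1 from by omega]
  intro j hj
  have := key (N - j) (by omega)
  rwa [show N - (N - j) = j from by omega] at this

lemma ker_D_zero_right {α β : ℂ} (hβ : β ≠ 0) {N : ℕ} {h : MvPolynomial (Fin 2) ℂ}
    (hh : h.IsHomogeneous N) (hD : α • pderiv 0 h + β • pderiv 1 h = 0)
    (h0 : h.coeff (mid N 0) = 0) : h = 0 := by
  apply homog_eq_zero hh
  have key : ∀ j, j ≤ N → h.coeff (mid (N - j) j) = 0 := by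
    intro j
    induction j with
    | zero => intro _; simpa using h0
    | succ j ih =>
      intro hj
      have hIH := ih (by omega)
      have hE := ker_D_coeff hD (N - j - 1) j
      have e1 : mid (N - j - 1 + 1) j = mid (N - j) j := by rw [show N - j - 1 + 1 = N - j from by omega]
      rw [e1, hIH, mul_zero, zero_add, mul_eq_zero, mul_eq_zero] at hE
      rcases hE with (hE | hE) | hE
      · exact absurd hE hβ
      · exfalso
        have : ((j : ℂ) + 1) ≠ 0 := by
          have : (0:ℝ) < (j:ℝ) + 1 := by positivity
          intro hc
          have := congrArg Complex.re hc
          simp at this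
          linarith
        exact this hE
      · rwa [show N - (j+1) = N - j - 1 from by omega]
  exact key

lemma homog_smul_add {N : ℕ} {h₁ h₂ : MvPolynomial (Fin 2) ℂ} (c₁ c₂ : ℂ)
    (hh₁ : h₁.IsHomogeneous N) (hh₂ : h₂.IsHomogeneous N) :
    (c₁ • h₁ + c₂ • h₂).IsHomogeneous N := by
  rw [← mem_homogeneousSubmodule] at hh₁ hh₂ ⊢
  exact Submodule.add_mem _ (Submodule.smul_mem _ _ hh₁) (Submodule.smul_mem _ _ hh₂)

lemma D_smul_add {α β c₁ c₂ : ℂ} {h₁ h₂ : MvPolynomial (Fin 2) ℂ}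
    (hD₁ : α • pderiv 0 h₁ + β • pderiv 1 h₁ = 0)
    (hD₂ : α • pderiv 0 h₂ + β • pderiv 1 h₂ = 0) :
    α • pderiv 0 (c₁ • h₁ + c₂ • h₂) + β • pderiv 1 (c₁ • h₁ + c₂ • h₂) = 0 := by
  have e0 : ∀ (i : Fin 2) (p : MvPolynomial (Fin 2) ℂ) (c : ℂ), pderiv i (c • p) = c • pderiv i p :=
    fun i p c => (pderiv i).toLinearMap.map_smul c p
  rw [map_add, map_add, e0, e0, e0, e0]
  calc α • (c₁ • pderiv 0 h₁ + c₂ • pderiv 0 h₂) + β • (c₁ • pderiv 1 h₁ + c₂ • pderiv 1 h₂)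
      = c₁ • (α • pderiv 0 h₁ + β • pderiv 1 h₁) + c₂ • (α • pderiv 0 h₂ + β • pderiv 1 h₂) := by
        rw [smul_add, smul_add, smul_add, smul_add]
        rw [smul_comm α c₁, smul_comm α c₂, smul_comm β c₁, smul_comm β c₂]
        abel
    _ = 0 := by rw [hD₁, hD₂, smul_zero, smul_zero, add_zero]

lemma pair_dep {α β : ℂ} (hne : ¬(α = 0 ∧ β = 0)) {N : ℕ} {h₁ h₂ : MvPolynomial (Fin 2) ℂ}
    (hh₁ : h₁.IsHomogeneous N) (hh₂ : h₂.IsHomogeneous N)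
    (hD₁ : α • pderiv 0 h₁ + β • pderiv 1 h₁ = 0)
    (hD₂ : α • pderiv 0 h₂ + β • pderiv 1 h₂ = 0) :
    ∃ c₁ c₂ : ℂ, ¬(c₁ = 0 ∧ c₂ = 0) ∧ c₁ • h₁ + c₂ • h₂ = 0 := by
  by_cases hα : α ≠ 0
  · by_cases hu0 : h₁.coeff (mid 0 N) = 0
    · refine ⟨1, 0, by simp, ?_⟩
      rw [ker_D_zero_left hα hh₁ hD₁ hu0]
      simp
    · refine ⟨h₂.coeff (mid 0 N), -(h₁.coeff (mid 0 N)),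
        fun hc => hu0 (neg_eq_zero.mp hc.2), ?_⟩
      apply ker_D_zero_left hα (homog_smul_add _ _ hh₁ hh₂) (D_smul_add hD₁ hD₂)
      rw [coeff_add, coeff_smul, coeff_smul, smul_eq_mul, smul_eq_mul]
      ring
  · have hβ : β ≠ 0 := by tauto
    by_cases hu0 : h₁.coeff (mid N 0) = 0
    · refine ⟨1, 0, by simp, ?_⟩
      rw [ker_D_zero_right hβ hh₁ hD₁ hu0]
      simp
    · refine ⟨h₂.coeff (mid N 0), -(h₁.coeff (mid N 0)),
        fun hc => hu0 (neg_eq_zero.mp hc.2), ?_⟩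
      apply ker_D_zero_right hβ (homog_smul_add _ _ hh₁ hh₂) (D_smul_add hD₁ hD₂)
      rw [coeff_add, coeff_smul, coeff_smul, smul_eq_mul, smul_eq_mul]
      ring

lemma coeff_mul_X0 (g : MvPolynomial (Fin 2) ℂ) (u v : ℕ) :
    (g * X 0).coeff (mid u v) = if 0 < u then g.coeff (mid (u-1) v) else 0 := by
  rw [coeff_mul_X']
  by_cases hu : 0 < u
  · rw [if_pos (by rw [Finsupp.mem_support_iff, mid_apply0]; omega), if_pos hu]
    congr 1
    ext i; fin_cases i <;> simp [mid, Finsupp.single_apply, Finsupp.tsub_apply]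
  · rw [if_neg (by rw [Finsupp.mem_support_iff, mid_apply0]; omega), if_neg hu]

lemma coeff_mul_X1 (g : MvPolynomial (Fin 2) ℂ) (u v : ℕ) :
    (g * X 1).coeff (mid u v) = if 0 < v then g.coeff (mid u (v-1)) else 0 := by
  rw [coeff_mul_X']
  by_cases hv : 0 < v
  · rw [if_pos (by rw [Finsupp.mem_support_iff, mid_apply1]; omega), if_pos hv]
    congr 1
    ext i; fin_cases i <;> simp [mid, Finsupp.single_apply, Finsupp.tsub_apply]
  · rw [if_neg (by rw [Finsupp.mem_support_iff, mid_apply1]; omega), if_neg hv]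

lemma div_linear_aux (k : ℕ) (hk : 1 ≤ k) (f : MvPolynomial (Fin 2) ℂ)
    (hf : f.IsHomogeneous k) (x : Fin 2 → ℂ) (hb : x 1 ≠ 0)
    (hev : eval x f = 0) :
    ∃ g, g.IsHomogeneous (k-1) ∧ f = (C (x 1) * X 0 - C (x 0) * X 1) * g := by
  set a := x 0 with ha
  set b := x 1 with hbb
  set c : ℕ → ℂ := fun j => f.coeff (mid (k-j) j) with hc
  set S : ℕ → ℂ := fun j => ∑ t ∈ Finset.range (j+1), c t * a^(j-t) * b^t with hS
  set e : ℕ → ℂ := fun j => S j / b^(j+1) with he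
  have hSsucc : ∀ j, S (j+1) = a * S j + c (j+1) * b^(j+1) := by
    intro j
    rw [hS]
    simp only
    rw [Finset.sum_range_succ, Finset.mul_sum]
    congr 1
    · apply Finset.sum_congr rfl
      intro t ht
      rw [show j + 1 - t = (j - t) + 1 from by
        have := Finset.mem_range.mp ht; omega]
      ring
    · rw [Nat.sub_self, pow_zero]; ring
  have hS0 : S 0 = c 0 := by simp [hS]
  have hSk : S k = 0 := by
    rw [← hev, eval_homog hf x, hS]
  set g := ∑ j ∈ Finset.range k, monomial (mid (k-1-j) j) (e j) with hg
  have hghom : g.IsHomogeneous (k-1) := by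
    rw [hg, ← mem_homogeneousSubmodule]
    apply Submodule.sum_mem
    intro j hj
    rw [mem_homogeneousSubmodule]
    exact isHomogeneous_monomial _ (by rw [degree_mid]; have := Finset.mem_range.mp hj; omega)
  refine ⟨g, hghom, ?_⟩
  have hlin : (C b * X 0 - C a * X 1 : MvPolynomial (Fin 2) ℂ).IsHomogeneous 1 := by
    have h1 : (C b * X 0 : MvPolynomial (Fin 2) ℂ).IsHomogeneous 1 := by
      have := (isHomogeneous_C (Fin 2) b).mul (isHomogeneous_X ℂ (0 : Fin 2))
      simpa using this
    have h2 : (C a * X 1 : MvPolynomial (Fin 2) ℂ).IsHomogeneous 1 := by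
      have := (isHomogeneous_C (Fin 2) a).mul (isHomogeneous_X ℂ (1 : Fin 2))
      simpa using this
    exact h1.sub h2
  have hRhom : ((C b * X 0 - C a * X 1) * g).IsHomogeneous k := by
    have := hlin.mul hghom
    rwa [show 1 + (k-1) = k from by omega] at this
  have hcoeffR : ∀ u v : ℕ, ((C b * X 0 - C a * X 1) * g).coeff (mid u v)
      = b * (if 0 < u then g.coeff (mid (u-1) v) else 0)
        - a * (if 0 < v then g.coeff (mid u (v-1)) else 0) := by
    intro u v
    rw [sub_mul, coeff_sub, mul_assoc, mul_assoc, mul_comm (X 0 : MvPolynomial (Fin 2) ℂ) g,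
      mul_comm (X 1 : MvPolynomial (Fin 2) ℂ) g, coeff_C_mul, coeff_C_mul,
      coeff_mul_X0, coeff_mul_X1]
  have main : ∀ j, j ≤ k → c j
      = b * (if 0 < k - j then g.coeff (mid (k-j-1) j) else 0)
        - a * (if 0 < j then g.coeff (mid (k-j) (j-1)) else 0) := by
    intro j hjk
    rw [hg]
    by_cases hj0 : j = 0
    · subst hj0
      rw [if_pos (show 0 < k - 0 from by omega), if_neg (show ¬ (0:ℕ) < 0 from by omega),
        coeff_sum_mid, if_pos ⟨by omega, by omega⟩]
      have he0 : e 0 = c 0 / b := by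
        rw [show e 0 = S 0 / b ^ (0+1) from rfl, hS0, pow_one]
      rw [he0]
      field_simp
      ring
    · by_cases hjk' : j = k
      · rw [if_neg (show ¬ 0 < k - j from by omega), if_pos (show 0 < j from by omega),
          coeff_sum_mid, if_pos ⟨by omega, by omega⟩]
        have hkk : j - 1 + 1 = j := by omega
        have hstep := hSsucc (j-1)
        rw [hkk] at hstep
        have hSj : S j = 0 := by rw [hjk']; exact hSk
        rw [hSj] at hstep
        have hek : e (j-1) = S (j-1) / b^j := by
          rw [show e (j-1) = S (j-1) / b ^ (j-1+1) from rfl, hkk]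
        rw [hek]
        field_simp
        linear_combination -hstep
      · rw [if_pos (show 0 < k - j from by omega), if_pos (show 0 < j from by omega),
          coeff_sum_mid, coeff_sum_mid, if_pos ⟨by omega, by omega⟩, if_pos ⟨by omega, by omega⟩]
        have hej' : e (j-1) = S (j-1) / b^j := by
          rw [show e (j-1) = S (j-1) / b ^ (j-1+1) from rfl, show j - 1 + 1 = j from by omega]
        have hstep := hSsucc (j-1)
        rw [show j - 1 + 1 = j from by omega] at hstep
        rw [show e j = S j / b ^ (j+1) from rfl, hej', hstep]
        field_simp
        ring
  apply MvPolynomial.ext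
  intro d
  rw [fin2_decomp d]
  by_cases hd : d 0 + d 1 = k
  case neg =>
    rw [homog_coeff_zero hf hd, homog_coeff_zero hRhom hd]
  case pos =>
    rw [show d 0 = k - d 1 from by omega, hcoeffR]
    exact main (d 1) (by omega)

lemma div_linear (k : ℕ) (hk : 1 ≤ k) (f : MvPolynomial (Fin 2) ℂ)
    (hf : f.IsHomogeneous k) (x : Fin 2 → ℂ) (hx : ¬(x 0 = 0 ∧ x 1 = 0))
    (hev : eval x f = 0) :
    ∃ g, g.IsHomogeneous (k-1) ∧ f = (C (x 1) * X 0 - C (x 0) * X 1) * g := by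
  by_cases hb : x 1 ≠ 0
  · exact div_linear_aux k hk f hf x hb hev
  · have ha : x 0 ≠ 0 := by tauto
    set σ : Fin 2 ≃ Fin 2 := Equiv.swap 0 1 with hσ
    have hσ0 : σ 0 = 1 := Equiv.swap_apply_left 0 1
    have hσ1 : σ 1 = 0 := Equiv.swap_apply_right 0 1
    set f' := rename σ f with hf'def
    have hf' : f'.IsHomogeneous k := hf.rename_isHomogeneous
    have hev' : eval (![x 1, x 0]) f' = 0 := by
      rw [hf'def, eval_rename, show (![x 1, x 0] ∘ σ) = x from funext fun i => by
        fin_cases i <;> simp [hσ0, hσ1]]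
      exact hev
    obtain ⟨g', hg', heq⟩ := div_linear_aux k hk f' hf' ![x 1, x 0]
      (by simpa using ha) hev'
    refine ⟨-(rename σ g'), hg'.rename_isHomogeneous.neg, ?_⟩
    have hsymm : rename σ f' = f := by
      rw [hf'def, rename_rename]
      have : (σ : Fin 2 → Fin 2) ∘ σ = id := by
        funext i; fin_cases i <;> simp [hσ0, hσ1]
      rw [this, rename_id, AlgHom.id_apply]
    have := congrArg (rename σ) heq
    rw [hsymm, map_mul] at this
    rw [this]
    have hren : rename σ (C (![x 1, x 0] 1) * X 0 - C (![x 1, x 0] 0) * X 1)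
        = C (x 0) * X 1 - C (x 1) * X 0 := by
      rw [map_sub, map_mul, map_mul, rename_C, rename_C, rename_X, rename_X, hσ0, hσ1]
      simp
    rw [hren]
    ring

lemma coeff_diffOp_homog {N : ℕ} {F : MvPolynomial (Fin 2) ℂ} (hF : F.IsHomogeneous (2*N))
    {i j : ℕ} (hi : i ≤ N) (hj : j ≤ N) :
    (diffOp (mid (N-j) j) F).coeff (mid (N-i) i)
      = F.coeff (mid (2*N-(i+j)) (i+j)) * ((2*N-(i+j)).descFactorial (N-j) : ℂ)
          * ((i+j).descFactorial j : ℂ) := by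
  conv_lhs => rw [← support_sum_monomial_coeff F]
  rw [map_sum, coeff_sum]
  have hterm : ∀ m ∈ F.support,
      (diffOp (mid (N-j) j) (monomial m (F.coeff m))).coeff (mid (N-i) i)
        = if m = mid (2*N-(i+j)) (i+j) then
            F.coeff (mid (2*N-(i+j)) (i+j)) * ((2*N-(i+j)).descFactorial (N-j) : ℂ)
              * ((i+j).descFactorial j : ℂ) else 0 := by
    intro m hm
    have hco : F.coeff m ≠ 0 := mem_support_iff.mp hm
    obtain ⟨p, r, rfl⟩ : ∃ p r, m = mid p r := ⟨m 0, m 1, fin2_decomp m⟩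
    have hpr : p + r = 2*N := homog_coeff_ne hF hco
    rw [diffOp_mon, coeff_monomial]
    by_cases hmm : mid p r = mid (2*N-(i+j)) (i+j)
    · obtain ⟨hp, hr⟩ := mid_inj hmm
      rw [if_pos hmm, if_pos (by rw [hp, hr]; congr 1 <;> omega)]
      rw [hp, hr]
    · rw [if_neg hmm]
      by_cases hcond : mid (p - (N-j)) (r - j) = mid (N-i) i
      · obtain ⟨h1, h2⟩ := mid_inj hcond
        by_cases hok : j ≤ r ∧ N - j ≤ p
        · exfalso
          apply hmm
          have : r = i + j := by omega
          have : p = 2*N - (i+j) := by omega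
          congr 1 <;> omega
        · rw [if_pos hcond]
          rcases not_and_or.mp hok with hbad | hbad
          · rw [show (r.descFactorial j : ℂ) = 0 from by
              rw [Nat.descFactorial_eq_zero_iff_lt.mpr (by omega)]; simp]
            ring
          · rw [show (p.descFactorial (N-j) : ℂ) = 0 from by
              rw [Nat.descFactorial_eq_zero_iff_lt.mpr (by omega)]; simp]
            ring
      · rw [if_neg hcond]
  rw [Finset.sum_congr rfl hterm, Finset.sum_ite_eq' F.support]
  by_cases hmem : mid (2*N-(i+j)) (i+j) ∈ F.support
  · rw [if_pos hmem]
  · rw [if_neg hmem, notMem_support_iff.mp hmem]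
    ring

lemma cat_inj {N : ℕ} {F : MvPolynomial (Fin 2) ℂ} (hF : F.IsHomogeneous (2*N))
    (hcat : catal N F ≠ 0) {q : MvPolynomial (Fin 2) ℂ} (hq : q.IsHomogeneous N)
    (hpq : polarLM F q = 0) : q = 0 := by
  have hfne : ∀ n : ℕ, ((n.factorial : ℂ)) ≠ 0 := fun n => Nat.cast_ne_zero.mpr n.factorial_ne_zero
  set MM : Matrix (Fin (N+1)) (Fin (N+1)) ℂ := Matrix.of fun i j : Fin (N+1) =>
    F.coeff (mid (2*N-((i:ℕ)+(j:ℕ))) ((i:ℕ)+(j:ℕ)))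
      * ((2*N-((i:ℕ)+(j:ℕ))).descFactorial (N-(j:ℕ)) : ℂ)
      * (((i:ℕ)+(j:ℕ)).descFactorial (j:ℕ) : ℂ) with hMM
  set ecoef : Fin (N+1) → ℂ := fun j => q.coeff (mid (N-(j:ℕ)) (j:ℕ)) with hec
  have hpolar : ∀ i : Fin (N+1),
      (polarLM F q).coeff (mid (N-(i:ℕ)) (i:ℕ)) = ∑ j : Fin (N+1), MM i j * ecoef j := by
    intro i
    rw [polar_apply, coeff_sum]
    rw [sum_homog hq (fun m => (q.coeff m • diffOp m F).coeff (mid (N-(i:ℕ)) (i:ℕ)))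
      (fun m hm => by rw [hm, zero_smul, coeff_zero])]
    rw [← Fin.sum_univ_eq_sum_range]
    apply Finset.sum_congr rfl
    intro j _
    rw [coeff_smul, coeff_diffOp_homog hF (by omega) (by omega), smul_eq_mul, hMM, hec]
    simp only [Matrix.of_apply]
    ring
  have hvec : MM.mulVec ecoef = 0 := by
    funext i
    have : MM.mulVec ecoef i = ∑ j : Fin (N+1), MM i j * ecoef j := by
      simp [Matrix.mulVec, dotProduct]
    rw [this, ← hpolar i, hpq, coeff_zero]
    rfl
  have key : ∀ i j : Fin (N+1), MM i j
      = (((2*N).factorial : ℂ) / (((N-(i:ℕ)).factorial : ℂ) * ((i:ℕ).factorial : ℂ)))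
        * (F.coeff (mid (2*N-((i:ℕ)+(j:ℕ))) ((i:ℕ)+(j:ℕ)))
            / (Nat.choose (2*N) ((i:ℕ)+(j:ℕ)) : ℂ)) := by
    intro i j
    have hiN : (i:ℕ) ≤ N := by omega
    have hjN : (j:ℕ) ≤ N := by omega
    have hij : (i:ℕ) + (j:ℕ) ≤ 2*N := by omega
    have hA1 : (((N-(i:ℕ)).factorial : ℂ))
        * ((2*N-((i:ℕ)+(j:ℕ))).descFactorial (N-(j:ℕ)) : ℂ)
        = ((2*N-((i:ℕ)+(j:ℕ))).factorial : ℂ) := by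
      have h := Nat.factorial_mul_descFactorial
        (show (N-(j:ℕ)) ≤ 2*N-((i:ℕ)+(j:ℕ)) from by omega)
      rw [show 2*N-((i:ℕ)+(j:ℕ)) - (N-(j:ℕ)) = N - (i:ℕ) from by omega] at h
      exact_mod_cast h
    have hA2 : (((i:ℕ).factorial : ℂ)) * (((i:ℕ)+(j:ℕ)).descFactorial (j:ℕ) : ℂ)
        = (((i:ℕ)+(j:ℕ)).factorial : ℂ) := by
      have h := Nat.factorial_mul_descFactorial (show (j:ℕ) ≤ (i:ℕ)+(j:ℕ) from by omega)
      rw [show (i:ℕ)+(j:ℕ) - (j:ℕ) = (i:ℕ) from by omega] at h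
      exact_mod_cast h
    have hA3 : ((Nat.choose (2*N) ((i:ℕ)+(j:ℕ)) : ℂ)) * (((i:ℕ)+(j:ℕ)).factorial : ℂ)
        * ((2*N-((i:ℕ)+(j:ℕ))).factorial : ℂ) = ((2*N).factorial : ℂ) := by
      exact_mod_cast Nat.choose_mul_factorial_mul_factorial hij
    have hCne : ((Nat.choose (2*N) ((i:ℕ)+(j:ℕ)) : ℂ)) ≠ 0 :=
      Nat.cast_ne_zero.mpr (Nat.choose_pos hij).ne'
    rw [hMM]
    simp only [Matrix.of_apply]
    rw [div_mul_div_comm, eq_div_iff (mul_ne_zero (mul_ne_zero (hfne _) (hfne _)) hCne)]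
    linear_combination (F.coeff (mid (2*N-((i:ℕ)+(j:ℕ))) ((i:ℕ)+(j:ℕ)))
        * (((i:ℕ)+(j:ℕ)).descFactorial (j:ℕ) : ℂ) * (((i:ℕ).factorial : ℂ))
        * ((Nat.choose (2*N) ((i:ℕ)+(j:ℕ)) : ℂ))) * hA1
      + (F.coeff (mid (2*N-((i:ℕ)+(j:ℕ))) ((i:ℕ)+(j:ℕ)))
        * ((Nat.choose (2*N) ((i:ℕ)+(j:ℕ)) : ℂ))
        * ((2*N-((i:ℕ)+(j:ℕ))).factorial : ℂ)) * hA2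
      + F.coeff (mid (2*N-((i:ℕ)+(j:ℕ))) ((i:ℕ)+(j:ℕ))) * hA3
  have hfactor : MM = (Matrix.diagonal fun i : Fin (N+1) =>
      ((2*N).factorial : ℂ) / (((N-(i:ℕ)).factorial : ℂ) * ((i:ℕ).factorial : ℂ)))
      * (Matrix.of fun i j : Fin (N + 1) =>
          F.coeff (Finsupp.single 0 (2 * N - ((i : ℕ) + j)) + Finsupp.single 1 ((i : ℕ) + j))
            / (Nat.choose (2 * N) ((i : ℕ) + j) : ℂ)) := by
    ext i j
    rw [Matrix.diagonal_mul]
    exact key i j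
  have hdet : MM.det ≠ 0 := by
    rw [hfactor, Matrix.det_mul, Matrix.det_diagonal]
    apply mul_ne_zero
    · rw [Finset.prod_ne_zero_iff]
      intro i _
      exact div_ne_zero (hfne _) (mul_ne_zero (hfne _) (hfne _))
    · exact hcat
  have hinj : Function.Injective MM.mulVec :=
    Matrix.mulVec_injective_iff_isUnit.mpr
      ((Matrix.isUnit_iff_isUnit_det MM).mpr (isUnit_iff_ne_zero.mpr hdet))
  have hzero : ecoef = 0 := hinj (by rw [hvec, Matrix.mulVec_zero])
  apply homog_eq_zero hq
  intro j hj
  have := congrFun hzero ⟨j, by omega⟩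
  simpa [hec] using this

/-- If `F` is a binary form of degree `2(d-2)` with nonzero catalecticant and `f₁, f₂` is a
basis of `F^⊥ ∩ ℂ[x,y]_(d-1)`, then `f₁` and `f₂` have no common zero besides the origin. -/
theorem perp_basis_no_common_zero (d : ℕ) (hd : 3 ≤ d) (F : MvPolynomial (Fin 2) ℂ)
    (hF : F.IsHomogeneous (2 * (d - 2))) (hcat : catal (d - 2) F ≠ 0)
    (f₁ f₂ : MvPolynomial (Fin 2) ℂ)
    (hf₁ : f₁.IsHomogeneous (d - 1)) (hf₂ : f₂.IsHomogeneous (d - 1))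
    (hp₁ : polarLM F f₁ = 0) (hp₂ : polarLM F f₂ = 0)
    (hind : LinearIndependent ℂ ![f₁, f₂]) :
    ∀ x : Fin 2 → ℂ, eval x f₁ = 0 → eval x f₂ = 0 → x = 0 := by
  intro x hx1 hx2
  by_contra hxne
  have hx : ¬ (x 0 = 0 ∧ x 1 = 0) := by
    rintro ⟨h0, h1⟩
    apply hxne
    funext i; fin_cases i <;> simp [h0, h1]
  obtain ⟨g₁, hg₁hom, hfg₁⟩ := div_linear (d-1) (by omega) f₁ hf₁ x hx hx1
  obtain ⟨g₂, hg₂hom, hfg₂⟩ := div_linear (d-1) (by omega) f₂ hf₂ x hx hx2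
  have hghom₁ : g₁.IsHomogeneous (d-2) := by
    rwa [show d - 1 - 1 = d - 2 from by omega] at hg₁hom
  have hghom₂ : g₂.IsHomogeneous (d-2) := by
    rwa [show d - 1 - 1 = d - 2 from by omega] at hg₂hom
  have hFhom : F.IsHomogeneous ((d-2) + (d-2)) := by
    rwa [show 2*(d-2) = (d-2) + (d-2) from by omega] at hF
  have hH₁ : (polarLM F g₁).IsHomogeneous (d-2) := polar_homog hFhom hghom₁
  have hH₂ : (polarLM F g₂).IsHomogeneous (d-2) := polar_homog hFhom hghom₂
  have hD₁ : (x 1) • pderiv 0 (polarLM F g₁) + (-(x 0)) • pderiv 1 (polarLM F g₁) = 0 := by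
    rw [← polar_lin_mul, ← hfg₁]; exact hp₁
  have hD₂ : (x 1) • pderiv 0 (polarLM F g₂) + (-(x 0)) • pderiv 1 (polarLM F g₂) = 0 := by
    rw [← polar_lin_mul, ← hfg₂]; exact hp₂
  have hne : ¬((x 1) = 0 ∧ (-(x 0)) = 0) := by
    rintro ⟨u, v⟩
    exact hx ⟨neg_eq_zero.mp v, u⟩
  obtain ⟨c₁, c₂, hcne, hczero⟩ := pair_dep hne hH₁ hH₂ hD₁ hD₂
  set q := c₁ • g₁ + c₂ • g₂ with hq
  have hqhom : q.IsHomogeneous (d-2) := homog_smul_add _ _ hghom₁ hghom₂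
  have hpolarq : polarLM F q = 0 := by
    rw [hq, map_add, map_smul, map_smul]
    exact hczero
  have hFhom' : F.IsHomogeneous (2 * (d-2)) := hF
  have hq0 : q = 0 := cat_inj hFhom' hcat hqhom hpolarq
  have hlin : c₁ • f₁ + c₂ • f₂ = 0 := by
    rw [hfg₁, hfg₂]
    have hexp : c₁ • ((C (x 1) * X 0 - C (x 0) * X 1) * g₁)
        + c₂ • ((C (x 1) * X 0 - C (x 0) * X 1) * g₂)
        = (C (x 1) * X 0 - C (x 0) * X 1) * q := by
      rw [hq, smul_eq_C_mul, smul_eq_C_mul, smul_eq_C_mul, smul_eq_C_mul]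
      ring
    rw [hexp, hq0, mul_zero]
  have hli := Fintype.linearIndependent_iff.mp hind ![c₁, c₂] ?_
  · exact hcne ⟨hli 0, hli 1⟩
  · rw [Fin.sum_univ_two]
    simpa using hlin
end

section
/- Let h₁, h₂ ∈ ℂ[x,y] be binary forms of degree m ≥ 2 with no common linear factor, and let l₁, l₂ be linear forms with l₁ ∣ h₁ and l₂ ∣ h₂. Then (h₁/l₁)(h₂/l₂) does not lie in the ℂ[x,y]_{m-2}-span of h₁ and h₂, i.e., there are no forms a₁, a₂ of degree m−2 with (h₁/l₁)(h₂/l₂) = a₁h₁ + a₂h₂. -/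
open MvPolynomial


open Finset

noncomputable section NotInSpanAux

namespace NotInSpanAux

abbrev R2 := MvPolynomial (Fin 2) ℂ

lemma deg2 (d : Fin 2 →₀ ℕ) : d.degree = d 0 + d 1 := by
  rw [Finsupp.degree_apply]
  rw [Finset.sum_subset (Finset.subset_univ d.support) (by simp +contextual)]
  exact Fin.sum_univ_two d

lemma homog_support_eq {g : R2} {n : ℕ} (hg : g.IsHomogeneous n) {d : Fin 2 →₀ ℕ}
    (hd : d ∈ g.support) : d 0 + d 1 = n := by
  by_contra hne
  exact (mem_support_iff.1 hd) (hg.coeff_eq_zero (by rw [deg2]; exact hne))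

lemma quot_homog {f g : R2} {d n : ℕ} (hf : f.IsHomogeneous d) (hf0 : f ≠ 0)
    (hfg : (f * g).IsHomogeneous (d + n)) : g.IsHomogeneous n := by
  by_cases hg : g = 0
  · simpa [hg] using isHomogeneous_zero _ _ n
  set N := g.totalDegree with hN
  have hcomp : ∀ i, i ≠ n → homogeneousComponent i g = 0 := by
    intro i hi
    by_cases hiN : N < i
    · exact homogeneousComponent_eq_zero i g hiN
    push_neg at hiN
    have h1 : f * g = ∑ j ∈ range (N + 1), f * homogeneousComponent j g := by
      rw [← Finset.mul_sum, sum_homogeneousComponent]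
    have h2 := congrArg (homogeneousComponent (d + i)) h1
    rw [map_sum] at h2
    rw [homogeneousComponent_of_mem ((mem_homogeneousSubmodule _ _).2 hfg)] at h2
    rw [if_neg (by omega)] at h2
    have h3 : ∀ j ∈ range (N + 1),
        homogeneousComponent (d + i) (f * homogeneousComponent j g)
          = if i = j then f * homogeneousComponent j g else 0 := by
      intro j _
      rw [homogeneousComponent_of_mem ((mem_homogeneousSubmodule _ _).2
        (hf.mul (homogeneousComponent_isHomogeneous j g)))]
      congr 1
      simp [Nat.add_right_cancel_iff, eq_iff_iff]
    rw [Finset.sum_congr rfl h3, Finset.sum_ite_eq (range (N+1)) i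
      (fun j => f * homogeneousComponent j g), if_pos (by simp; omega)] at h2
    rcases mul_eq_zero.1 h2.symm with h | h
    · exact absurd h hf0
    · exact h
  rw [← sum_homogeneousComponent (φ := g)]
  apply IsHomogeneous.sum
  intro j _
  by_cases hj : j = n
  · subst hj; exact homogeneousComponent_isHomogeneous j g
  · rw [hcomp j hj]; exact isHomogeneous_zero _ _ _

lemma eval_two (v : Fin 2 → ℂ) (g : R2) :
    eval v g = ∑ d ∈ g.support, coeff d g * (v 0 ^ d 0 * v 1 ^ d 1) := by
  rw [eval_eq]
  apply Finset.sum_congr rfl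
  intro d hd
  congr 1
  rw [Finset.prod_subset (Finset.subset_univ d.support) (by simp +contextual)]
  exact Fin.prod_univ_two _

lemma eval_zero_beta {g : R2} {n : ℕ} (hg : g.IsHomogeneous n) (β : ℂ) :
    eval ![0, β] g = coeff (Finsupp.single 1 n) g * β ^ n := by
  rw [eval_two]
  rw [Finset.sum_eq_single (Finsupp.single 1 n)]
  · simp
  · intro d hd hne
    have h1 := homog_support_eq hg hd
    have h2 : d 0 ≠ 0 := by
      intro h0
      apply hne
      ext i
      fin_cases i <;> simp [h0] <;> omega
    simp [zero_pow h2]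
  · intro h
    simp [notMem_support_iff.1 h]

lemma X0_dvd {g : R2} {n : ℕ} (hg : g.IsHomogeneous n)
    (hc : coeff (Finsupp.single 1 n) g = 0) : (X 0 : R2) ∣ g := by
  rw [← support_sum_monomial_coeff g]
  apply Finset.dvd_sum
  intro d hd
  rw [X_dvd_monomial]
  right
  intro h0
  have h1 := homog_support_eq hg hd
  have : d = Finsupp.single 1 n := by
    ext i; fin_cases i <;> simp [h0] <;> omega
  exact mem_support_iff.1 hd (this ▸ hc)

lemma X1_dvd {g : R2} {n : ℕ} (hg : g.IsHomogeneous n)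
    (hc : coeff (Finsupp.single 0 n) g = 0) : (X 1 : R2) ∣ g := by
  rw [← support_sum_monomial_coeff g]
  apply Finset.dvd_sum
  intro d hd
  rw [X_dvd_monomial]
  right
  intro h1
  have h0 := homog_support_eq hg hd
  have : d = Finsupp.single 0 n := by
    ext i; fin_cases i <;> simp [h1] <;> omega
  exact mem_support_iff.1 hd (this ▸ hc)

def lchg (a b c d : ℂ) (h : a * d - b * c ≠ 0) : R2 ≃ₐ[ℂ] R2 :=
  AlgEquiv.ofAlgHom
    (aeval ![C a * X 0 + C b * X 1, C c * X 0 + C d * X 1])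
    (aeval ![C (a*d-b*c)⁻¹ * (C d * X 0 - C b * X 1),
             C (a*d-b*c)⁻¹ * (- C c * X 0 + C a * X 1)])
    (by
      apply MvPolynomial.algHom_ext
      intro i
      fin_cases i
      · rw [AlgHom.comp_apply, AlgHom.id_apply]
        show (aeval _) ((aeval _) (X 0 : R2)) = X 0
        simp only [aeval_X, Matrix.cons_val_zero, Matrix.cons_val_one, Matrix.head_cons, map_add,
          map_mul, map_sub, aeval_C, MvPolynomial.algebraMap_eq]
        rw [show (C d * (C a * X 0 + C b * X 1) - C b * (C c * X 0 + C d * X 1) : R2)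
              = C (a*d - b*c) * X 0 by rw [C_sub, C_mul, C_mul]; ring]
        rw [← mul_assoc, ← C_mul, inv_mul_cancel₀ h, C_1, one_mul]
      · rw [AlgHom.comp_apply, AlgHom.id_apply]
        show (aeval _) ((aeval _) (X 1 : R2)) = X 1
        simp only [aeval_X, Matrix.cons_val_zero, Matrix.cons_val_one, Matrix.head_cons, map_add,
          map_mul, map_sub, map_neg, aeval_C, MvPolynomial.algebraMap_eq]
        rw [show (-C c * (C a * X 0 + C b * X 1) + C a * (C c * X 0 + C d * X 1) : R2)
              = C (a*d - b*c) * X 1 by rw [C_sub, C_mul, C_mul]; ring]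
        rw [← mul_assoc, ← C_mul, inv_mul_cancel₀ h, C_1, one_mul])
    (by
      apply MvPolynomial.algHom_ext
      intro i
      fin_cases i
      · rw [AlgHom.comp_apply, AlgHom.id_apply]
        show (aeval _) ((aeval _) (X 0 : R2)) = X 0
        simp only [aeval_X, Matrix.cons_val_zero, Matrix.cons_val_one, Matrix.head_cons, map_add,
          map_mul, map_sub, map_neg, aeval_C, MvPolynomial.algebraMap_eq]
        rw [show (C a * (C (a*d-b*c)⁻¹ * (C d * X 0 - C b * X 1)) +
              C b * (C (a*d-b*c)⁻¹ * (- C c * X 0 + C a * X 1)) : R2)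
              = C (a*d - b*c)⁻¹ * (C (a*d-b*c) * X 0) by rw [C_sub, C_mul, C_mul]; ring]
        rw [← mul_assoc, ← C_mul, inv_mul_cancel₀ h, C_1, one_mul]
      · rw [AlgHom.comp_apply, AlgHom.id_apply]
        show (aeval _) ((aeval _) (X 1 : R2)) = X 1
        simp only [aeval_X, Matrix.cons_val_zero, Matrix.cons_val_one, Matrix.head_cons, map_add,
          map_mul, map_sub, map_neg, aeval_C, MvPolynomial.algebraMap_eq]
        rw [show (C c * (C (a*d-b*c)⁻¹ * (C d * X 0 - C b * X 1)) +
              C d * (C (a*d-b*c)⁻¹ * (- C c * X 0 + C a * X 1)) : R2)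
              = C (a*d - b*c)⁻¹ * (C (a*d-b*c) * X 1) by rw [C_sub, C_mul, C_mul]; ring]
        rw [← mul_assoc, ← C_mul, inv_mul_cancel₀ h, C_1, one_mul])

lemma lchg_apply (a b c d : ℂ) (h : a * d - b * c ≠ 0) (p : R2) :
    lchg a b c d h p = aeval ![C a * X 0 + C b * X 1, C c * X 0 + C d * X 1] p := rfl

lemma lchg_symm_apply (a b c d : ℂ) (h : a * d - b * c ≠ 0) (p : R2) :
    (lchg a b c d h).symm p = aeval ![C (a*d-b*c)⁻¹ * (C d * X 0 - C b * X 1),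
             C (a*d-b*c)⁻¹ * (- C c * X 0 + C a * X 1)] p := rfl

lemma lin_homog (a b : ℂ) : (C a * X 0 + C b * X 1 : R2).IsHomogeneous 1 :=
  ((isHomogeneous_X ℂ 0).C_mul a).add ((isHomogeneous_X ℂ 1).C_mul b)

lemma eval_comp (v : Fin 2 → ℂ) (w : Fin 2 → R2) (g : R2) :
    eval v (aeval w g) = eval (fun i => eval v (w i)) g := by
  rw [aeval_def, eval₂_comp_left (eval v)]
  rw [show ((eval v).comp (algebraMap ℂ R2)) = RingHom.id ℂ by ext r; simp]
  rfl

lemma root_factor {g : R2} {n : ℕ} (hg : g.IsHomogeneous n) (α β : ℂ) (hβ : β ≠ 0)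
    (h0 : eval ![α, β] g = 0) : (C β * X 0 - C α * X 1 : R2) ∣ g := by
  have hdet : β * 1 - (-α) * 0 ≠ 0 := by simpa using hβ
  set χ := lchg β (-α) 0 1 hdet with hχ
  set g' := χ.symm g with hg'
  set w : Fin 2 → R2 := ![C (β*1-(-α)*0)⁻¹ * (C 1 * X 0 - C (-α) * X 1),
        C (β*1-(-α)*0)⁻¹ * (- C 0 * X 0 + C β * X 1)] with hwdef
  have hrew : g' = aeval w g := lchg_symm_apply _ _ _ _ _ _
  have hw0 : (w 0).IsHomogeneous 1 := by
    show (C (β*1-(-α)*0)⁻¹ * (C 1 * X 0 - C (-α) * X 1) : R2).IsHomogeneous 1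
    rw [show (C (β*1-(-α)*0)⁻¹ * (C 1 * X 0 - C (-α) * X 1) : R2)
        = C ((β*1-(-α)*0)⁻¹ * 1) * X 0 + C ((β*1-(-α)*0)⁻¹ * α) * X 1 by
      rw [C_mul, C_mul, map_neg]; ring]
    exact lin_homog _ _
  have hw1 : (w 1).IsHomogeneous 1 := by
    show (C (β*1-(-α)*0)⁻¹ * (- C 0 * X 0 + C β * X 1) : R2).IsHomogeneous 1
    rw [show (C (β*1-(-α)*0)⁻¹ * (- C 0 * X 0 + C β * X 1) : R2)
        = C ((β*1-(-α)*0)⁻¹ * (-0)) * X 0 + C ((β*1-(-α)*0)⁻¹ * β) * X 1 by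
      rw [C_mul, C_mul, map_neg]; ring]
    exact lin_homog _ _
  have hg'h : g'.IsHomogeneous n := by
    rw [hrew, show n = 1 * n by omega]
    apply hg.aeval
    intro i
    fin_cases i
    · exact hw0
    · exact hw1
  have hev : eval ![0, β] g' = 0 := by
    rw [hrew, eval_comp]
    rw [show (fun i => eval ![0, β] (w i)) = ![α, β] by
      funext i
      fin_cases i
      · show eval ![0, β] (w 0) = α
        rw [hwdef]
        simp
        field_simp
      · show eval ![0, β] (w 1) = β
        rw [hwdef]
        simp
        field_simp]
    exact h0
  have hX0 : (X 0 : R2) ∣ g' := by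
    apply X0_dvd hg'h
    have h2 := eval_zero_beta hg'h β
    rw [hev] at h2
    exact (mul_eq_zero.1 h2.symm).resolve_right (pow_ne_zero _ hβ)
  obtain ⟨u, hu⟩ := hX0
  have hgw : g = χ (X 0) * χ u := by
    rw [← map_mul, ← hu, hg', AlgEquiv.apply_symm_apply]
  have hX : χ (X 0) = C β * X 0 - C α * X 1 := by
    rw [hχ, lchg_apply]
    simp only [aeval_X, Matrix.cons_val_zero]
    rw [map_neg]
    ring
  exact ⟨χ u, by rw [hgw, hX]⟩

lemma prime_X0 : Prime (X 0 : R2) := by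
  rw [← MulEquiv.prime_iff (MvPolynomial.finSuccEquiv ℂ 1).toMulEquiv]
  show Prime (MvPolynomial.finSuccEquiv ℂ 1 (X 0))
  rw [MvPolynomial.finSuccEquiv_X_zero]
  exact Polynomial.prime_X

lemma linear_rep {l : R2} (hl : l.IsHomogeneous 1) :
    l = C (coeff (Finsupp.single 0 1) l) * X 0 + C (coeff (Finsupp.single 1 1) l) * X 1 := by
  have hsub : l.support ⊆ {Finsupp.single 0 1, Finsupp.single 1 1} := by
    intro d hd
    have h1 := homog_support_eq hl hd
    simp only [Finset.mem_insert, Finset.mem_singleton]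
    rcases Nat.eq_zero_or_pos (d 0) with h0 | h0
    · right; ext i; fin_cases i <;> simp [h0] <;> omega
    · left; ext i; fin_cases i <;> simp <;> omega
  have hne : (Finsupp.single 0 1 : Fin 2 →₀ ℕ) ≠ Finsupp.single 1 1 := by
    intro h
    have := DFunLike.congr_fun h 0
    simp at this
  calc l = ∑ d ∈ l.support, monomial d (coeff d l) := (support_sum_monomial_coeff l).symm
    _ = ∑ d ∈ ({Finsupp.single 0 1, Finsupp.single 1 1} : Finset (Fin 2 →₀ ℕ)),
          monomial d (coeff d l) := by
        apply Finset.sum_subset hsub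
        intro d _ hd
        rw [notMem_support_iff.1 hd, monomial_zero]
    _ = _ := by
        rw [Finset.sum_pair hne]
        congr 1 <;> · rw [monomial_eq]; simp

lemma prime_linear {l : R2} (hl : l.IsHomogeneous 1) (h0 : l ≠ 0) : Prime l := by
  obtain ⟨a, b, hrep⟩ : ∃ a b : ℂ, l = C a * X 0 + C b * X 1 := ⟨_, _, linear_rep hl⟩
  have hab : a ≠ 0 ∨ b ≠ 0 := by
    by_contra hc
    push_neg at hc
    exact h0 (by rw [hrep, hc.1, hc.2]; simp)
  by_cases haz : a = 0
  · have hbz : b ≠ 0 := hab.resolve_left (by simp [haz])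
    have hdet : a * 0 - b * 1 ≠ 0 := by simpa using hbz
    have hXl : lchg a b 1 0 hdet (X 0) = l := by
      rw [lchg_apply]
      simp only [aeval_X, Matrix.cons_val_zero]
      exact hrep.symm
    rw [← hXl]
    exact (MulEquiv.prime_iff (lchg a b 1 0 hdet).toMulEquiv).mpr prime_X0
  · have hdet : a * 1 - b * 0 ≠ 0 := by simpa using haz
    have hXl : lchg a b 0 1 hdet (X 0) = l := by
      rw [lchg_apply]
      simp only [aeval_X, Matrix.cons_val_zero]
      exact hrep.symm
    rw [← hXl]
    exact (MulEquiv.prime_iff (lchg a b 0 1 hdet).toMulEquiv).mpr prime_X0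

lemma exists_linear_factor {p : R2} {n : ℕ} (hp : p.IsHomogeneous n) (hp0 : p ≠ 0)
    (hn : 1 ≤ n) : ∃ l : R2, l.IsHomogeneous 1 ∧ l ≠ 0 ∧ l ∣ p := by
  by_cases hc : coeff (Finsupp.single 0 n) p = 0
  · exact ⟨X 1, isHomogeneous_X ℂ 1, X_ne_zero 1, X1_dvd hp hc⟩
  set P : Polynomial ℂ := ∑ d ∈ p.support, Polynomial.C (coeff d p) * Polynomial.X ^ (d 0)
    with hP
  have hPn : P.coeff n = coeff (Finsupp.single 0 n) p := by
    rw [hP, Polynomial.finset_sum_coeff]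
    rw [Finset.sum_eq_single (Finsupp.single 0 n)]
    · simp [Polynomial.coeff_C_mul, Polynomial.coeff_X_pow]
    · intro d hd hne
      have h1 := homog_support_eq hp hd
      rw [Polynomial.coeff_C_mul, Polynomial.coeff_X_pow, if_neg, mul_zero]
      intro hne2
      apply hne
      ext i; fin_cases i <;> simp <;> omega
    · intro h
      simp [notMem_support_iff.1 h]
  have hPdeg : P.degree ≠ 0 := by
    intro hdg
    have h2 : (n : WithBot ℕ) ≤ P.degree := Polynomial.le_degree_of_ne_zero (hPn ▸ hc)
    rw [hdg] at h2
    have : n ≤ 0 := by exact_mod_cast h2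
    omega
  obtain ⟨r, hr⟩ := IsAlgClosed.exists_root P hPdeg
  have hev : eval ![r, 1] p = 0 := by
    have he : eval ![r, 1] p = P.eval r := by
      rw [eval_two, hP, Polynomial.eval_finset_sum]
      apply Finset.sum_congr rfl
      intro d hd
      simp
    rw [he]
    exact hr
  refine ⟨C 1 * X 0 - C r * X 1, ?_, ?_, root_factor hp r 1 one_ne_zero hev⟩
  · exact ((isHomogeneous_X ℂ 0).C_mul 1).sub ((isHomogeneous_X ℂ 1).C_mul r)
  · intro h
    have := congrArg (eval ![1, 0]) h
    simp at this

lemma homog_zero_unit {t : R2} (h : t.IsHomogeneous 0) (ht0 : t ≠ 0) : IsUnit t := by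
  have hC : t = C (coeff 0 t) := by
    ext d
    by_cases hd : d = 0
    · subst hd; simp
    · rw [coeff_C, if_neg (Ne.symm hd)]
      apply h.coeff_eq_zero
      rw [deg2]
      intro hsum
      apply hd
      ext i; fin_cases i <;> simp <;> omega
  have hc0 : coeff 0 t ≠ 0 := by
    intro h2
    exact ht0 (by rw [hC, h2, C_0])
  rw [hC]
  exact IsUnit.of_mul_eq_one (C (coeff 0 t)⁻¹)
    (by rw [← C_mul, mul_inv_cancel₀ hc0, C_1])

lemma descent : ∀ (k : ℕ) (q t u a : R2), q.IsHomogeneous (k+1) → q ≠ 0 → t.IsHomogeneous k →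
    (∀ l : R2, l.IsHomogeneous 1 → l ≠ 0 → l ∣ q → ¬ l ∣ u) → t * u = a * q → t = 0 := by
  intro k
  induction k with
  | zero =>
    intro q t u a hq hq0 ht hnd heq
    by_contra ht0
    obtain ⟨l, hl1, hl0, q', hq'⟩ := exists_linear_factor hq hq0 (by omega)
    have hlp : Prime l := prime_linear hl1 hl0
    have hlt : l ∣ t := (hlp.dvd_or_dvd (show l ∣ t * u from
      ⟨a * q', by rw [heq, hq']; ring⟩)).resolve_right (hnd l hl1 hl0 ⟨q', hq'⟩)
    exact hlp.not_unit (isUnit_of_dvd_unit hlt (homog_zero_unit ht ht0))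
  | succ k ih =>
    intro q t u a hq hq0 ht hnd heq
    by_contra ht0
    obtain ⟨l, hl1, hl0, q', hq'⟩ := exists_linear_factor hq hq0 (by omega)
    have hlp : Prime l := prime_linear hl1 hl0
    have hlt : l ∣ t := (hlp.dvd_or_dvd (show l ∣ t * u from
      ⟨a * q', by rw [heq, hq']; ring⟩)).resolve_right (hnd l hl1 hl0 ⟨q', hq'⟩)
    obtain ⟨t', ht'⟩ := hlt
    have hq'h : q'.IsHomogeneous (k+1) := by
      apply quot_homog hl1 hl0
      rw [← hq']
      exact (show k + 2 = 1 + (k+1) by omega) ▸ hq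
    have hq'0 : q' ≠ 0 := by
      intro h
      exact hq0 (by rw [hq', h, mul_zero])
    have ht'h : t'.IsHomogeneous k := by
      apply quot_homog hl1 hl0
      rw [← ht']
      exact (show k + 1 = 1 + k by omega) ▸ ht
    have heq' : t' * u = a * q' := by
      apply mul_left_cancel₀ hl0
      rw [show l * (t' * u) = (l * t') * u by ring, ← ht', heq, hq']
      ring
    have := ih q' t' u a hq'h hq'0 ht'h
      (fun l' h1 h2 hdvd => hnd l' h1 h2 (hdvd.trans ⟨l, by rw [hq']; ring⟩)) heq'
    exact ht0 (by rw [ht', this, mul_zero])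

end NotInSpanAux

end NotInSpanAux

open NotInSpanAux in
/-- Let `h₁, h₂` be binary forms of degree `m ≥ 2` with no common linear factor, and let
`l₁ ∣ h₁`, `l₂ ∣ h₂` be linear factors, say `h₁ = l₁q₁` and `h₂ = l₂q₂`. Then
`(h₁/l₁)(h₂/l₂) = q₁q₂` is not of the form `a₁h₁ + a₂h₂` with `a₁, a₂` of degree `m-2`. -/
theorem not_in_span (m : ℕ) (hm : 2 ≤ m) (h₁ h₂ : MvPolynomial (Fin 2) ℂ)
    (hh₁ : h₁.IsHomogeneous m) (hh₂ : h₂.IsHomogeneous m)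
    (hnc : ∀ l : MvPolynomial (Fin 2) ℂ, l.IsHomogeneous 1 → l ≠ 0 → ¬(l ∣ h₁ ∧ l ∣ h₂))
    (l₁ l₂ q₁ q₂ : MvPolynomial (Fin 2) ℂ)
    (hl₁ : l₁.IsHomogeneous 1) (hl₂ : l₂.IsHomogeneous 1) (hl₁0 : l₁ ≠ 0) (hl₂0 : l₂ ≠ 0)
    (hq₁ : h₁ = l₁ * q₁) (hq₂ : h₂ = l₂ * q₂) :
    ¬∃ a₁ a₂ : MvPolynomial (Fin 2) ℂ, a₁.IsHomogeneous (m - 2) ∧ a₂.IsHomogeneous (m - 2)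
      ∧ q₁ * q₂ = a₁ * h₁ + a₂ * h₂ := by
  rintro ⟨a₁, a₂, ha₁, ha₂, heq⟩
  rw [hq₁, hq₂] at heq
  -- h₂ ≠ 0, hence q₂ ≠ 0
  have hh₂0 : h₂ ≠ 0 := by
    intro h
    exact hnc l₁ hl₁ hl₁0 ⟨⟨q₁, hq₁⟩, h ▸ dvd_zero l₁⟩
  have hq₂0 : q₂ ≠ 0 := by
    intro h
    exact hh₂0 (by rw [hq₂, h, mul_zero])
  -- q₂ is homogeneous of degree m - 1
  have hq₂h : q₂.IsHomogeneous (m - 1) := by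
    apply quot_homog hl₂ hl₂0
    rw [← hq₂]
    exact (show m = 1 + (m - 1) by omega) ▸ hh₂
  -- l₂ does not divide q₁
  have hl₂q₁ : ¬ l₂ ∣ q₁ := by
    intro hdvd
    exact hnc l₂ hl₂ hl₂0 ⟨hdvd.trans ⟨l₁, by rw [hq₁]; ring⟩, ⟨q₂, hq₂⟩⟩
  -- l₂ divides q₂ - a₁ * l₁
  have hl₂p : Prime l₂ := prime_linear hl₂ hl₂0
  have hdvd : l₂ ∣ q₂ - a₁ * l₁ :=
    (hl₂p.dvd_or_dvd (show l₂ ∣ q₁ * (q₂ - a₁ * l₁) from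
      ⟨a₂ * q₂, by linear_combination heq⟩)).resolve_left hl₂q₁
  obtain ⟨t, ht⟩ := hdvd
  -- t ≠ 0
  have ht0 : t ≠ 0 := by
    intro h
    rw [h, mul_zero, sub_eq_zero] at ht
    apply hnc l₁ hl₁ hl₁0
    exact ⟨⟨q₁, hq₁⟩, ⟨l₂ * a₁, by rw [hq₂, ht]; ring⟩⟩
  -- t is homogeneous of degree m - 2
  have hth : t.IsHomogeneous (m - 2) := by
    apply quot_homog hl₂ hl₂0
    rw [← ht]
    have h1 : (q₂ - a₁ * l₁).IsHomogeneous (m - 1) := by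
      apply hq₂h.sub
      exact (show m - 2 + 1 = m - 1 by omega) ▸ (ha₁.mul hl₁)
    exact (show m - 1 = 1 + (m - 2) by omega) ▸ h1
  -- key equation : t * q₁ = a₂ * q₂
  have hkey : t * q₁ = a₂ * q₂ := by
    apply mul_left_cancel₀ hl₂0
    linear_combination (-q₁) * ht + heq
  -- descent gives t = 0, contradiction
  have hcond : ∀ l : MvPolynomial (Fin 2) ℂ, l.IsHomogeneous 1 → l ≠ 0 → l ∣ q₂ → ¬ l ∣ q₁ := by
    intro l h1 h2 hdq₂ hdq₁
    exact hnc l h1 h2 ⟨hdq₁.trans ⟨l₁, by rw [hq₁]; ring⟩, hdq₂.trans ⟨l₂, by rw [hq₂]; ring⟩⟩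
  exact ht0 (descent (m - 2) q₂ t q₁ a₂
    ((show m - 1 = m - 2 + 1 by omega) ▸ hq₂h) hq₂0 hth hcond hkey)
end

section
/- Let W ⊆ ℂ[x,y]_m be a 2-dimensional subspace of binary forms of degree m, and let ρ be the one-parameter subgroup t ↦ diag(t^{-1}, t) of SL₂. Choose a basis f₁ = ∑ C(m,i)aᵢx^{m-i}yⁱ, f₂ = ∑ C(m,i)bᵢx^{m-i}yⁱ, let k be the least index with (a_k,b_k) ≠ (0,0) and ℓ the least index with (a_ℓ,b_ℓ) linearly independent from (a_k,b_k). Then the Hilbert–Mumford index of W in the Plücker embedding ℙ(Λ²ℂ[x,y]_m) with respect to ρ equals 2(m − k − ℓ). -/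
/-- Hilbert–Mumford index of a two-dimensional subspace `W = ⟨f₁, f₂⟩ ⊆ ℂ[x,y]_m`,
with `f₁ = ∑ C(m,i)aᵢx^(m-i)yⁱ`, `f₂ = ∑ C(m,i)bᵢx^(m-i)yⁱ`, with respect to the
one-parameter subgroup `ρ : t ↦ diag(t⁻¹,t)` of `SL₂`: if `k` is the least index with the
column `(aₖ,bₖ)` nonzero and `ℓ` the least index whose column is linearly independent from
the `k`-th, then `μ(W,ρ) = max {2(m-i-j) : i < j, aᵢbⱼ - aⱼbᵢ ≠ 0}` equals `2(m-k-ℓ)`. -/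
theorem hilbert_mumford_index (m : ℕ) (a b : Fin (m + 1) → ℂ) (k ℓ : Fin (m + 1))
    (hk1 : ¬(a k = 0 ∧ b k = 0)) (hk2 : ∀ i < k, a i = 0 ∧ b i = 0)
    (hl1 : a k * b ℓ - a ℓ * b k ≠ 0) (hl2 : ∀ i < ℓ, a k * b i - a i * b k = 0) :
    IsGreatest {z : ℤ | ∃ i j : Fin (m + 1), i < j ∧ a i * b j - a j * b i ≠ 0 ∧
        z = 2 * ((m : ℤ) - (i : ℕ) - (j : ℕ))}
      (2 * ((m : ℤ) - (k : ℕ) - (ℓ : ℕ))) := by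
  have hkl : k < ℓ := by
    rcases lt_trichotomy k ℓ with h | h | h
    · exact h
    · exact absurd (by rw [h]; ring) hl1
    · obtain ⟨ha, hb⟩ := hk2 ℓ h
      simp [ha, hb] at hl1
  constructor
  · exact ⟨k, ℓ, hkl, hl1, rfl⟩
  · rintro z ⟨i, j, hij, hdet, rfl⟩
    have hki : k ≤ i := by
      by_contra h
      push_neg at h
      obtain ⟨ha, hb⟩ := hk2 i h
      simp [ha, hb] at hdet
    have hlj : ℓ ≤ j := by
      by_contra h
      push_neg at h
      have hi : a k * b i - a i * b k = 0 := hl2 i (hij.trans h)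
      have hj : a k * b j - a j * b k = 0 := hl2 j h
      apply hdet
      rcases not_and_or.mp hk1 with hak | hbk
      · have h1 : a k * (a i * b j - a j * b i) = 0 := by
          linear_combination a i * hj - a j * hi
        exact (mul_eq_zero.mp h1).resolve_left hak
      · have h1 : b k * (a i * b j - a j * b i) = 0 := by
          linear_combination b i * hj - b j * hi
        exact (mul_eq_zero.mp h1).resolve_left hbk
    have h1 : (k : ℕ) ≤ (i : ℕ) := hki
    have h2 : (ℓ : ℕ) ≤ (j : ℕ) := hlj
    omega
end

section
/- Let f ∈ ℂ[x,y] be a binary form of degree d ≥ 3 not linearly equivalent to x^{d-1}y, and suppose g ∈ ℂ[x,y]_d is not proportional to f but ⟨g_x, g_y⟩ ⊆ ⟨f_x, f_y⟩ as subspaces of ℂ[x,y]_{d-1}. Then f is GL₂-equivalent to x^d + y^d. -/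
open MvPolynomial Matrix

/-- Substitution of a linear change of variables: `(substM M f)(x) = f(M ⬝ x)`. -/
noncomputable def substM {n : ℕ} (M : Matrix (Fin n) (Fin n) ℂ) (f : MvPolynomial (Fin n) ℂ) :
    MvPolynomial (Fin n) ℂ :=
  aeval (fun i => ∑ j, C (M i j) * X j) f

/-- Two binary forms are linearly equivalent if one is obtained from the other by an
invertible linear substitution, up to a nonzero scalar. -/
def LinEquiv (f h : MvPolynomial (Fin 2) ℂ) : Prop :=
  ∃ (M : Matrix (Fin 2) (Fin 2) ℂ) (c : ℂ), IsUnit M.det ∧ c ≠ 0 ∧ f = c • substM M h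

namespace Grad

lemma pderiv_pderiv {σ : Type*} [DecidableEq σ] (i j : σ) (f : MvPolynomial σ ℂ) :
    pderiv i (pderiv j f) = pderiv j (pderiv i f) := by
  rcases eq_or_ne i j with rfl | hij
  · rfl
  · induction f using MvPolynomial.induction_on' with
    | add p q hp hq => simp [hp, hq]
    | monomial s a =>
      simp only [pderiv_monomial]
      rw [tsub_tsub, tsub_tsub, add_comm]
      congr 1
      have h1 : (s - Finsupp.single j 1 : σ →₀ ℕ) i = s i := by
        simp [Finsupp.tsub_apply, Finsupp.single_apply, Ne.symm hij]
      have h2 : (s - Finsupp.single i 1 : σ →₀ ℕ) j = s j := by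
        simp [Finsupp.tsub_apply, Finsupp.single_apply, hij]
      rw [h1, h2]; ring

lemma coeff_pderiv {σ : Type*} [DecidableEq σ] (i : σ) (f : MvPolynomial σ ℂ) (m : σ →₀ ℕ) :
    coeff m (pderiv i f) = ((m i + 1 : ℕ) : ℂ) * coeff (m + Finsupp.single i 1) f := by
  induction f using MvPolynomial.induction_on' with
  | add p q hp hq => simp [hp, hq, mul_add]
  | monomial s a =>
    rw [pderiv_monomial, coeff_monomial, coeff_monomial]
    split_ifs with h1 h2 h2
    · have : s i = m i + 1 := by rw [h2]; simp
      rw [this]; push_cast; ring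
    · rcases Nat.eq_zero_or_pos (s i) with h0 | h0
      · simp [h0]
      · exfalso
        apply h2
        ext k
        rcases eq_or_ne k i with rfl | hk
        · have := congrFun (congrArg (fun (u : σ →₀ ℕ) => (u : σ → ℕ)) h1) k
          simp [Finsupp.tsub_apply] at this
          simp [← this]
          omega
        · have := congrFun (congrArg (fun (u : σ →₀ ℕ) => (u : σ → ℕ)) h1) k
          simp [Finsupp.tsub_apply, Finsupp.single_apply, Ne.symm hk] at this ⊢
          omega
    · exfalso; apply h1; rw [h2]; simp
    · ring

end Grad

lemma coeff_eq_zero_of_pderiv_eq_zero {σ : Type*} [DecidableEq σ] {i : σ}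
    {f : MvPolynomial σ ℂ} (h : pderiv i f = 0) {m : σ →₀ ℕ} (hm : m i ≠ 0) :
    coeff m f = 0 := by
  set m' : σ →₀ ℕ := m - Finsupp.single i 1 with hm'
  have hmm : m' + Finsupp.single i 1 = m := by
    ext k
    rcases eq_or_ne k i with rfl | hk
    · simp [hm', Finsupp.tsub_apply]; omega
    · simp [hm', Finsupp.tsub_apply, Finsupp.single_apply, Ne.symm hk]
  have := Grad.coeff_pderiv i f m'
  rw [h, hmm] at this
  simp only [coeff_zero] at this
  have hne : ((m' i + 1 : ℕ) : ℂ) ≠ 0 := by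
    exact Nat.cast_ne_zero.mpr (by omega)
  exact (mul_eq_zero.mp this.symm).resolve_left hne

lemma degree_fin2 (m : Fin 2 →₀ ℕ) : m.degree = m 0 + m 1 := by
  rw [Finsupp.degree_apply]
  rw [Finset.sum_subset (Finset.subset_univ m.support)]
  · exact Fin.sum_univ_two m
  · intro x _ hx
    simpa using Finsupp.notMem_support_iff.mp hx

lemma zero_of_pderiv {d : ℕ} (hd : d ≠ 0) {f : MvPolynomial (Fin 2) ℂ}
    (hf : f.IsHomogeneous d) (h0 : pderiv 0 f = 0) (h1 : pderiv 1 f = 0) : f = 0 := by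
  ext m
  rw [coeff_zero]
  rcases eq_or_ne (m 0) 0 with hz0 | hz0
  · rcases eq_or_ne (m 1) 0 with hz1 | hz1
    · refine hf.coeff_eq_zero ?_
      rw [degree_fin2, hz0, hz1]
      omega
    · exact coeff_eq_zero_of_pderiv_eq_zero h1 hz1
  · exact coeff_eq_zero_of_pderiv_eq_zero h0 hz0

lemma eq_zero_of_C_mul_X_pow {i : Fin 2} {y : ℂ} {k : ℕ}
    (h : (C y * X i ^ k : MvPolynomial (Fin 2) ℂ) = 0) : y = 0 := by
  have := congrArg (coeff (Finsupp.single i k)) h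
  rwa [coeff_zero, coeff_C_mul, coeff_X_pow, if_pos rfl, mul_one] at this

lemma sub_add_single {σ : Type*} [DecidableEq σ] (m : σ →₀ ℕ) (i : σ) (h : m i ≠ 0) :
    m - Finsupp.single i 1 + Finsupp.single i 1 = m := by
  ext k
  rcases eq_or_ne k i with rfl | hk
  · simp [Finsupp.tsub_apply]; omega
  · simp [Finsupp.tsub_apply, Finsupp.single_apply, Ne.symm hk]

lemma coeff_eq_zero_step {f : MvPolynomial (Fin 2) ℂ} {i : Fin 2} {m : Fin 2 →₀ ℕ}
    (hm : m i ≠ 0) (h : coeff (m - Finsupp.single i 1) (pderiv i f) = 0) :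
    coeff m f = 0 := by
  have h2 := Grad.coeff_pderiv i f (m - Finsupp.single i 1)
  rw [h, sub_add_single m i hm] at h2
  have hne : (((m - Finsupp.single i 1 : Fin 2 →₀ ℕ) i + 1 : ℕ) : ℂ) ≠ 0 :=
    Nat.cast_ne_zero.mpr (by omega)
  exact (mul_eq_zero.mp h2.symm).resolve_left hne

lemma coeff_eq_zero_cross {f : MvPolynomial (Fin 2) ℂ}
    (h : pderiv 0 (pderiv 1 f) = 0) {m : Fin 2 →₀ ℕ}
    (hm0 : m 0 ≠ 0) (hm1 : m 1 ≠ 0) : coeff m f = 0 := by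
  have hq : pderiv 1 (pderiv 0 f) = 0 := by rw [Grad.pderiv_pderiv]; exact h
  refine coeff_eq_zero_step hm0 ?_
  refine coeff_eq_zero_of_pderiv_eq_zero hq ?_
  rw [Finsupp.tsub_apply]
  rw [show (Finsupp.single (0:Fin 2) 1) 1 = 0 from Finsupp.single_eq_of_ne (by decide)]
  omega

lemma coeff_eq_zero_two {f : MvPolynomial (Fin 2) ℂ}
    (h : pderiv 0 (pderiv 0 f) = 0) {m : Fin 2 →₀ ℕ}
    (hm0 : 2 ≤ m 0) : coeff m f = 0 := by
  refine coeff_eq_zero_step (i := 0) (by omega) ?_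
  refine coeff_eq_zero_of_pderiv_eq_zero h ?_
  rw [Finsupp.tsub_apply, Finsupp.single_eq_same]
  show m 0 - 1 ≠ 0
  omega

lemma fin2_ext {m n : Fin 2 →₀ ℕ} (h0 : m 0 = n 0) (h1 : m 1 = n 1) : m = n := by
  ext j
  fin_cases j
  · exact h0
  · exact h1

lemma structure_xy {d : ℕ} (hd : 1 ≤ d) {f : MvPolynomial (Fin 2) ℂ}
    (hf : f.IsHomogeneous d) (h : pderiv 0 (pderiv 1 f) = 0) :
    f = C (coeff (Finsupp.single 0 d) f) * X 0 ^ d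
      + C (coeff (Finsupp.single 1 d) f) * X 1 ^ d := by
  have hne : (Finsupp.single (0:Fin 2) d) ≠ Finsupp.single 1 d := by
    intro hcon
    have := DFunLike.congr_fun hcon 0
    simp [Finsupp.single_apply] at this
    omega
  ext m
  rw [coeff_add, coeff_C_mul, coeff_C_mul, coeff_X_pow, coeff_X_pow]
  by_cases hm0 : Finsupp.single (0:Fin 2) d = m
  · rw [if_pos hm0, if_neg (by rw [← hm0]; exact fun hc => hne hc.symm), ← hm0]
    ring
  · rw [if_neg hm0]
    by_cases hm1 : Finsupp.single (1:Fin 2) d = m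
    · rw [if_pos hm1, ← hm1]; ring
    · rw [if_neg hm1, mul_zero, mul_zero, add_zero]
      by_contra hc
      have hdeg : m 0 + m 1 = d := by
        by_contra hne'
        exact hc (hf.coeff_eq_zero (by rw [degree_fin2]; exact hne'))
      rcases eq_or_ne (m 0) 0 with hz0 | hz0
      · refine hm1 (fin2_ext ?_ ?_)
        · simp [Finsupp.single_apply, hz0]
        · simp [Finsupp.single_apply]; omega
      · rcases eq_or_ne (m 1) 0 with hz1 | hz1
        · refine hm0 (fin2_ext ?_ ?_)
          · simp [Finsupp.single_apply]; omega
          · simp [Finsupp.single_apply, hz1]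
        · exact hc (coeff_eq_zero_cross h hz0 hz1)

lemma X_mul_X_pow_eq (k : ℕ) :
    (X 0 * X 1 ^ k : MvPolynomial (Fin 2) ℂ)
      = monomial (Finsupp.single 0 1 + Finsupp.single 1 k) 1 := by
  rw [X_pow_eq_monomial, ← pow_one (X 0 : MvPolynomial (Fin 2) ℂ), X_pow_eq_monomial,
    monomial_mul, mul_one]

lemma structure_x2 {d : ℕ} (hd : 2 ≤ d) {f : MvPolynomial (Fin 2) ℂ}
    (hf : f.IsHomogeneous d) (h : pderiv 0 (pderiv 0 f) = 0) :
    f = C (coeff (Finsupp.single 0 1 + Finsupp.single 1 (d-1)) f) * (X 0 * X 1 ^ (d-1))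
      + C (coeff (Finsupp.single 1 d) f) * X 1 ^ d := by
  set μ : Fin 2 →₀ ℕ := Finsupp.single 0 1 + Finsupp.single 1 (d-1) with hμ
  have hμ0 : μ 0 = 1 := by simp [hμ, Finsupp.single_apply]
  have hμ1 : μ 1 = d - 1 := by simp [hμ, Finsupp.single_apply]
  have hne : μ ≠ Finsupp.single 1 d := by
    intro hcon
    have h2 := DFunLike.congr_fun hcon 0
    rw [hμ0] at h2
    simp [Finsupp.single_apply] at h2
  ext m
  rw [coeff_add, coeff_C_mul, coeff_C_mul, coeff_X_pow, X_mul_X_pow_eq, coeff_monomial, ← hμ]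
  by_cases hm0 : μ = m
  · rw [if_pos hm0, if_neg (by rw [← hm0]; exact fun hc => hne hc.symm), ← hm0]
    ring
  · rw [if_neg hm0]
    by_cases hm1 : Finsupp.single (1:Fin 2) d = m
    · rw [if_pos hm1, ← hm1]; ring
    · rw [if_neg hm1, mul_zero, mul_zero, add_zero]
      by_contra hc
      have hdeg : m 0 + m 1 = d := by
        by_contra hne'
        exact hc (hf.coeff_eq_zero (by rw [degree_fin2]; exact hne'))
      rcases Nat.lt_or_ge (m 0) 2 with hlt | hge
      · have hm01 : m 0 = 0 ∨ m 0 = 1 := by omega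
        rcases hm01 with hm | hm
        · refine hm1 (fin2_ext ?_ ?_)
          · simp [Finsupp.single_apply, hm]
          · simp [Finsupp.single_apply]; omega
        · refine hm0 (fin2_ext ?_ ?_)
          · rw [hμ0, hm]
          · rw [hμ1]; omega
      · exact hc (coeff_eq_zero_two h hge)

lemma substM_C {n : ℕ} (M : Matrix (Fin n) (Fin n) ℂ) (a : ℂ) :
    substM M (C a) = C a := by
  simp [substM, algebraMap_eq]

lemma substM_X {n : ℕ} (M : Matrix (Fin n) (Fin n) ℂ) (i : Fin n) :
    substM M (X i) = ∑ j, C (M i j) * X j := by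
  simp [substM]

lemma substM_zero {n : ℕ} (M : Matrix (Fin n) (Fin n) ℂ) : substM M 0 = 0 := by
  simp [substM]

lemma substM_add {n : ℕ} (M : Matrix (Fin n) (Fin n) ℂ) (f g : MvPolynomial (Fin n) ℂ) :
    substM M (f + g) = substM M f + substM M g := map_add _ _ _

lemma substM_mul {n : ℕ} (M : Matrix (Fin n) (Fin n) ℂ) (f g : MvPolynomial (Fin n) ℂ) :
    substM M (f * g) = substM M f * substM M g := map_mul _ _ _

lemma substM_smul {n : ℕ} (M : Matrix (Fin n) (Fin n) ℂ) (c : ℂ) (f : MvPolynomial (Fin n) ℂ) :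
    substM M (c • f) = c • substM M f := by
  rw [smul_eq_C_mul, smul_eq_C_mul, substM_mul, substM_C]

lemma substM_sub {n : ℕ} (M : Matrix (Fin n) (Fin n) ℂ) (f g : MvPolynomial (Fin n) ℂ) :
    substM M (f - g) = substM M f - substM M g := map_sub _ _ _

lemma substM_one {n : ℕ} (f : MvPolynomial (Fin n) ℂ) : substM 1 f = f := by
  have : (fun i => ∑ j, C ((1 : Matrix (Fin n) (Fin n) ℂ) i j) * X j)
      = (X : Fin n → MvPolynomial (Fin n) ℂ) := by
    funext i
    rw [Finset.sum_eq_single i]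
    · simp [Matrix.one_apply]
    · intro j _ hj
      simp [Matrix.one_apply, Ne.symm hj]
    · simp
  rw [substM, this, aeval_X_left, AlgHom.id_apply]

lemma substM_comp {n : ℕ} (M N : Matrix (Fin n) (Fin n) ℂ) (f : MvPolynomial (Fin n) ℂ) :
    substM M (substM N f) = substM (N * M) f := by
  show (aeval _) ((aeval _) f) = _
  rw [← AlgHom.comp_apply]
  rw [show ((aeval fun i => ∑ j, C (M i j) * X j : MvPolynomial (Fin n) ℂ →ₐ[ℂ] _).comp
      (aeval fun i => ∑ j, C (N i j) * X j))
      = aeval (fun i => ∑ j, C ((N * M) i j) * X j) from ?_]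
  · rfl
  · apply MvPolynomial.algHom_ext
    intro i
    simp only [AlgHom.comp_apply, aeval_X, map_sum, _root_.map_mul, aeval_C, algebraMap_eq,
      Finset.mul_sum]
    rw [Finset.sum_comm]
    refine Finset.sum_congr rfl fun j _ => ?_
    rw [Matrix.mul_apply, map_sum, Finset.sum_mul]
    refine Finset.sum_congr rfl fun k _ => ?_
    rw [_root_.map_mul]
    ring

lemma substM_isHomogeneous {n d : ℕ} (M : Matrix (Fin n) (Fin n) ℂ)
    {f : MvPolynomial (Fin n) ℂ} (hf : f.IsHomogeneous d) :
    (substM M f).IsHomogeneous d := by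
  have := hf.aeval (fun i => ∑ j, C (M i j) * X j) (n := 1) ?_
  · simpa [substM] using this
  · intro i
    apply MvPolynomial.IsHomogeneous.sum
    intro j _
    exact (isHomogeneous_X _ _).C_mul _

lemma pderiv_substM_X (M : Matrix (Fin 2) (Fin 2) ℂ) (k i : Fin 2) :
    pderiv i (substM M (X k)) = C (M k i) := by
  rw [substM_X, Fin.sum_univ_two, map_add, pderiv_C_mul, pderiv_C_mul]
  fin_cases i <;> simp

lemma pderiv_substM (M : Matrix (Fin 2) (Fin 2) ℂ) (f : MvPolynomial (Fin 2) ℂ) (i : Fin 2) :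
    pderiv i (substM M f)
      = C (M 0 i) * substM M (pderiv 0 f) + C (M 1 i) * substM M (pderiv 1 f) := by
  induction f using MvPolynomial.induction_on with
  | C a =>
    rw [substM_C, pderiv_C, pderiv_C, pderiv_C, substM_zero]
    ring
  | add p q hp hq =>
    simp only [substM_add, map_add, hp, hq]
    ring
  | mul_X p j hp =>
    rw [substM_mul, pderiv_mul, hp, pderiv_substM_X]
    fin_cases j <;>
      simp only [Fin.mk_zero, Fin.mk_one, Fin.isValue, pderiv_mul, pderiv_X_self,
        pderiv_X_of_ne (by decide : (0:Fin 2) ≠ 1),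
        pderiv_X_of_ne (by decide : (1:Fin 2) ≠ 0), mul_one, mul_zero, add_zero,
        substM_add, substM_mul, _root_.map_one] <;>
      ring

lemma substM_inv_cancel {n : ℕ} (M : Matrix (Fin n) (Fin n) ℂ) (hM : IsUnit M.det)
    (f : MvPolynomial (Fin n) ℂ) : substM M⁻¹ (substM M f) = f := by
  rw [substM_comp, Matrix.mul_nonsing_inv _ hM, substM_one]

lemma pderiv_self_C_mul_X_pow (i : Fin 2) (B : ℂ) (k : ℕ) :
    pderiv i (C B * X i ^ k : MvPolynomial (Fin 2) ℂ) = C (B * k) * X i ^ (k-1) := by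
  rw [pderiv_C_mul, pderiv_pow, pderiv_X_self, mul_one, _root_.map_mul,
    show ((k : MvPolynomial (Fin 2) ℂ)) = C (k:ℂ) from (map_natCast (C : ℂ →+* _) k).symm]
  ring

lemma pderiv_other_C_mul_X_pow {i j : Fin 2} (hij : j ≠ i) (B : ℂ) (k : ℕ) :
    pderiv i (C B * X j ^ k : MvPolynomial (Fin 2) ℂ) = 0 := by
  rw [pderiv_C_mul, pderiv_pow, pderiv_X_of_ne hij, mul_zero, mul_zero]

lemma pow_case (d : ℕ) (hd : 3 ≤ d) (f g : MvPolynomial (Fin 2) ℂ)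
    (hf : f.IsHomogeneous d) (hg : g.IsHomogeneous d)
    (a b c e : ℂ)
    (hab : a • pderiv 0 f + b • pderiv 1 f = pderiv 0 g)
    (hce : c • pderiv 0 f + e • pderiv 1 f = pderiv 1 g)
    (M : Matrix (Fin 2) (Fin 2) ℂ) (hM : IsUnit M.det)
    (B : ℂ) (hsub : substM M f = C B * X 1 ^ d) :
    ∃ τ : ℂ, g = τ • f := by
  have hd0 : d ≠ 0 := by omega
  rcases eq_or_ne B 0 with rfl | hB
  · -- f = 0
    have hf0 : f = 0 := by
      have := substM_inv_cancel M hM f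
      rw [hsub] at this
      simpa [substM_zero] using this.symm
    have hg0 : g = 0 := by
      refine zero_of_pderiv hd0 hg ?_ ?_
      · rw [← hab, hf0]; simp
      · rw [← hce, hf0]; simp
    exact ⟨0, by rw [hg0, zero_smul]⟩
  · set F0 := substM M (pderiv 0 f) with hF0def
    set F1 := substM M (pderiv 1 f) with hF1def
    have hdet : M.det ≠ 0 := by
      intro hz; rw [hz] at hM; simpa using hM
    have hi : C (M 0 0) * F0 + C (M 1 0) * F1 = 0 := by
      rw [← pderiv_substM, hsub, pderiv_other_C_mul_X_pow (by decide)]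
    have hii : C (M 0 1) * F0 + C (M 1 1) * F1 = C (B * d) * X 1 ^ (d-1) := by
      rw [← pderiv_substM, hsub, pderiv_self_C_mul_X_pow]
    set u : ℂ := -(M 1 0) * (B * d) / M.det with hu
    set v : ℂ := (M 0 0) * (B * d) / M.det with hv
    have hF0 : F0 = C u * X 1 ^ (d-1) := by
      have h1 : C M.det * F0 = C (-(M 1 0) * (B * d)) * X 1 ^ (d-1) := by
        rw [Matrix.det_fin_two]
        simp only [_root_.map_mul, map_sub, map_neg] at hii ⊢
        linear_combination C (M 1 1) * hi - C (M 1 0) * hii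
      have h2 : C (M.det)⁻¹ * (C M.det * F0) = F0 := by
        rw [← mul_assoc, ← _root_.map_mul, inv_mul_cancel₀ hdet, C_1, one_mul]
      rw [← h2, h1, ← mul_assoc, ← _root_.map_mul, hu]
      congr 2
      field_simp
    have hF1 : F1 = C v * X 1 ^ (d-1) := by
      have h1 : C M.det * F1 = C ((M 0 0) * (B * d)) * X 1 ^ (d-1) := by
        rw [Matrix.det_fin_two]
        simp only [_root_.map_mul, map_sub, map_neg] at hii ⊢
        linear_combination C (M 0 0) * hii - C (M 0 1) * hi
      have h2 : C (M.det)⁻¹ * (C M.det * F1) = F1 := by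
        rw [← mul_assoc, ← _root_.map_mul, inv_mul_cancel₀ hdet, C_1, one_mul]
      rw [← h2, h1, ← mul_assoc, ← _root_.map_mul, hv]
      congr 2
      field_simp
    have hG0 : substM M (pderiv 0 g) = C (a*u + b*v) * X 1 ^ (d-1) := by
      rw [← hab, substM_add, substM_smul, substM_smul, ← hF0def, ← hF1def, hF0, hF1,
        smul_eq_C_mul, smul_eq_C_mul]
      simp only [map_add, _root_.map_mul]
      ring
    have hG1 : substM M (pderiv 1 g) = C (c*u + e*v) * X 1 ^ (d-1) := by
      rw [← hce, substM_add, substM_smul, substM_smul, ← hF0def, ← hF1def, hF0, hF1,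
        smul_eq_C_mul, smul_eq_C_mul]
      simp only [map_add, _root_.map_mul]
      ring
    set lam : ℂ := M 0 0 * (a*u + b*v) + M 1 0 * (c*u + e*v) with hlam
    set mu : ℂ := M 0 1 * (a*u + b*v) + M 1 1 * (c*u + e*v) with hmu
    have hg0' : pderiv 0 (substM M g) = C lam * X 1 ^ (d-1) := by
      rw [pderiv_substM, hG0, hG1, hlam]
      simp only [map_add, _root_.map_mul]
      ring
    have hg1' : pderiv 1 (substM M g) = C mu * X 1 ^ (d-1) := by
      rw [pderiv_substM, hG0, hG1, hmu]
      simp only [map_add, _root_.map_mul]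
      ring
    have hlam0 : lam = 0 := by
      have hcomm := Grad.pderiv_pderiv (0 : Fin 2) 1 (substM M g)
      rw [hg1', hg0', pderiv_other_C_mul_X_pow (by decide),
        pderiv_self_C_mul_X_pow] at hcomm
      have := eq_zero_of_C_mul_X_pow hcomm.symm
      have hcast : ((d - 1 : ℕ) : ℂ) ≠ 0 := Nat.cast_ne_zero.mpr (by omega)
      exact (mul_eq_zero.mp this).resolve_right hcast
    set τ : ℂ := mu / (B * d) with hτ
    have hBd : (B * (d:ℂ)) ≠ 0 := mul_ne_zero hB (Nat.cast_ne_zero.mpr hd0)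
    refine ⟨τ, ?_⟩
    have hhom : (g - τ • f).IsHomogeneous d := by
      rw [smul_eq_C_mul]
      exact hg.sub (hf.C_mul τ)
    have hsubh : substM M (g - τ • f) = substM M g - C (τ * B) * X 1 ^ d := by
      rw [substM_sub, substM_smul, hsub, smul_eq_C_mul, ← mul_assoc, ← _root_.map_mul]
    have hz : substM M (g - τ • f) = 0 := by
      refine zero_of_pderiv hd0 (substM_isHomogeneous M hhom) ?_ ?_
      · rw [hsubh, map_sub, hg0', hlam0, pderiv_other_C_mul_X_pow (by decide)]
        simp
      · rw [hsubh, map_sub, hg1', pderiv_self_C_mul_X_pow,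
          show τ * B * (d:ℂ) = mu by rw [hτ]; field_simp,
          sub_self]
    have := substM_inv_cancel M hM (g - τ • f)
    rw [hz, substM_zero] at this
    have hgf : g - τ • f = 0 := this.symm
    exact sub_eq_zero.mp hgf

lemma substM_pow {n : ℕ} (M : Matrix (Fin n) (Fin n) ℂ) (f : MvPolynomial (Fin n) ℂ) (k : ℕ) :
    substM M (f ^ k) = substM M f ^ k := by
  simp [substM, map_pow]

lemma cancel_C {κ : ℂ} (hκ : κ ≠ 0) {Z : MvPolynomial (Fin 2) ℂ} (h : C κ * Z = 0) : Z = 0 := by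
  have h2 := congrArg (fun z => C κ⁻¹ * z) h
  simpa [← mul_assoc, ← _root_.map_mul, inv_mul_cancel₀ hκ] using h2

/-- If `f ∈ ℂ[x,y]_d` (`d ≥ 3`) is not linearly equivalent to `x^(d-1)y` and
`⟨g_x, g_y⟩ ⊆ ⟨f_x, f_y⟩` for some `g ∈ ℂ[x,y]_d` not proportional to `f`, then `f` is
linearly equivalent to `x^d + y^d`. -/
theorem gradient_span_containment (d : ℕ) (hd : 3 ≤ d) (f g : MvPolynomial (Fin 2) ℂ)
    (hf : f.IsHomogeneous d) (hg : g.IsHomogeneous d)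
    (hnot : ¬LinEquiv f (X 0 ^ (d - 1) * X 1))
    (hprop : ¬∃ c : ℂ, g = c • f)
    (hx : (pderiv (0 : Fin 2) g) ∈ Submodule.span ℂ {pderiv (0 : Fin 2) f, pderiv (1 : Fin 2) f})
    (hy : (pderiv (1 : Fin 2) g) ∈ Submodule.span ℂ {pderiv (0 : Fin 2) f, pderiv (1 : Fin 2) f}) :
    LinEquiv f (X 0 ^ d + X 1 ^ d) := by
  classical
  have hd0 : d ≠ 0 := by omega
  obtain ⟨a, b, hab⟩ := Submodule.mem_span_pair.mp hx
  obtain ⟨c, e, hce⟩ := Submodule.mem_span_pair.mp hy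
  have key : C c * pderiv 0 (pderiv 0 f) + C (e - a) * pderiv 0 (pderiv 1 f)
      - C b * pderiv 1 (pderiv 1 f) = 0 := by
    have h1 := congrArg (pderiv (1 : Fin 2)) hab
    have h2 := congrArg (pderiv (0 : Fin 2)) hce
    simp only [map_add, Derivation.map_smul] at h1 h2
    rw [Grad.pderiv_pderiv 1 0 f, Grad.pderiv_pderiv 1 0 g] at h1
    rw [smul_eq_C_mul, smul_eq_C_mul] at h1 h2
    rw [map_sub]
    linear_combination h2 - h1
  by_cases htriv : c = 0 ∧ b = 0 ∧ e = a
  · exfalso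
    apply hprop
    obtain ⟨hc0, hb0, hea⟩ := htriv
    refine ⟨a, ?_⟩
    have hhom : (g - a • f).IsHomogeneous d := by
      rw [smul_eq_C_mul]; exact hg.sub (hf.C_mul a)
    have hz : g - a • f = 0 := by
      refine zero_of_pderiv hd0 hhom ?_ ?_
      · rw [map_sub, ← hab, hb0, Derivation.map_smul]; simp
      · rw [map_sub, ← hce, hc0, hea, Derivation.map_smul]; simp
    exact sub_eq_zero.mp hz
  · obtain ⟨p, r, s, t, hc, hm, hb, hpr, hst⟩ :
        ∃ p r s t : ℂ, c = p * s ∧ e - a = p * t + r * s ∧ b = -(r * t)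
          ∧ ¬(p = 0 ∧ r = 0) ∧ ¬(s = 0 ∧ t = 0) := by
      by_cases hcz : c = 0
      · exact ⟨0, 1, e - a, -b, by rw [hcz]; ring, by ring, by ring,
          fun h => one_ne_zero h.2,
          fun h => htriv ⟨hcz, neg_eq_zero.mp h.2, sub_eq_zero.mp h.1⟩⟩
      · obtain ⟨w, hw⟩ := IsAlgClosed.exists_pow_nat_eq ((e-a)^2 + 4*b*c) (by norm_num : 0 < 2)
        set t0 : ℂ := (e - a + w)/(2*c) with ht0
        have key0 : 2*c*t0 = (e-a) + w := by
          rw [ht0]; field_simp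
        have h5 : 4*c*(c*t0^2 - (e-a)*t0 - b) = 0 := by
          rw [show 4*c*(c*t0^2 - (e-a)*t0 - b)
              = (2*c*t0)^2 - 2*(e-a)*(2*c*t0) - 4*c*b from by ring, key0]
          linear_combination hw
        have hq : b = c * t0^2 - (e-a)*t0 := by
          rcases mul_eq_zero.mp h5 with h | h
          · exact absurd (by linear_combination h/4 : c = 0) hcz
          · linear_combination -h
        exact ⟨c, e - a - c * t0, 1, t0, by ring, by ring, by rw [hq]; ring,
          fun h => hcz h.1, fun h => one_ne_zero h.1⟩
    by_cases hdeg : p * t - r * s = 0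
    · -- q is (up to scalar) a perfect square: f ~ x^{d-1}y or a pure power
      obtain ⟨κ, hs, ht⟩ : ∃ κ : ℂ, s = κ * p ∧ t = κ * r := by
        rcases eq_or_ne p 0 with rfl | hp
        · have hr : r ≠ 0 := fun h => hpr ⟨rfl, h⟩
          have hs0 : s = 0 := by
            have hrs : r * s = 0 := by linear_combination -hdeg
            exact (mul_eq_zero.mp hrs).resolve_left hr
          exact ⟨t / r, by rw [hs0]; ring, by field_simp⟩
        · refine ⟨s / p, by field_simp, ?_⟩
          field_simp
          linear_combination hdeg
      have hκ : κ ≠ 0 := by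
        rintro rfl
        exact hst ⟨by rw [hs]; ring, by rw [ht]; ring⟩
      obtain ⟨u, v, huv⟩ : ∃ u v : ℂ, p * v - u * r ≠ 0 := by
        rcases eq_or_ne p 0 with hp | hp
        · have hr : r ≠ 0 := fun h => hpr ⟨hp, h⟩
          refine ⟨1, 0, ?_⟩
          rw [hp]
          simpa using hr
        · refine ⟨0, 1, ?_⟩
          simpa using hp
      set M : Matrix (Fin 2) (Fin 2) ℂ := !![p, u; r, v] with hMdef
      have hMu : IsUnit M.det := by
        rw [hMdef, Matrix.det_fin_two_of]
        exact isUnit_iff_ne_zero.mpr huv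
      have keyM : C c * substM M (pderiv 0 (pderiv 0 f))
          + C (e - a) * substM M (pderiv 0 (pderiv 1 f))
          - C b * substM M (pderiv 1 (pderiv 1 f)) = 0 := by
        have h := congrArg (substM M) key
        simpa only [substM_add, substM_sub, substM_mul, substM_C, substM_zero] using h
      have hf00 : pderiv 0 (pderiv 0 (substM M f)) = 0 := by
        rw [pderiv_substM M f 0, map_add, pderiv_C_mul, pderiv_C_mul,
          pderiv_substM M (pderiv 0 f) 0, pderiv_substM M (pderiv 1 f) 0,
          Grad.pderiv_pderiv 1 0 f,
          show M 0 0 = p from rfl, show M 1 0 = r from rfl]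
        simp only [hc, hm, hb, hs, ht, _root_.map_mul, map_add, map_neg] at keyM
        refine cancel_C hκ ?_
        linear_combination keyM
      obtain ⟨A, B, hstruct⟩ : ∃ A B : ℂ, substM M f
          = C A * (X 0 * X 1 ^ (d-1)) + C B * X 1 ^ d :=
        ⟨_, _, structure_x2 (by omega) (substM_isHomogeneous M hf) hf00⟩
      by_cases hA0 : A = 0
      · exfalso
        apply hprop
        refine pow_case d hd f g hf hg a b c e hab hce M hMu B ?_
        rw [hstruct, hA0]
        simp
      · exfalso
        apply hnot
        set P : Matrix (Fin 2) (Fin 2) ℂ := !![0, 1; A, B] with hPdef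
        have hPdet : IsUnit P.det := by
          rw [hPdef, Matrix.det_fin_two_of]
          simpa using hA0
        have hXd : (X 1 : MvPolynomial (Fin 2) ℂ)^(d-1) * X 1 = X 1 ^ d := by
          rw [← pow_succ, Nat.sub_add_cancel (by omega)]
        have hP0 : substM P (X 0) = X 1 := by
          rw [substM_X, Fin.sum_univ_two,
            show P 0 0 = (0:ℂ) from rfl, show P 0 1 = (1:ℂ) from rfl]
          simp
        have hP1 : substM P (X 1) = C A * X 0 + C B * X 1 := by
          rw [substM_X, Fin.sum_univ_two,
            show P 1 0 = A from rfl, show P 1 1 = B from rfl]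
        have hP : substM P (X 0 ^ (d-1) * X 1)
            = C A * (X 0 * X 1 ^ (d-1)) + C B * X 1 ^ d := by
          rw [substM_mul, substM_pow, hP0, hP1, ← hXd]
          ring
        refine ⟨P * M⁻¹, 1, ?_, one_ne_zero, ?_⟩
        · rw [Matrix.det_mul]
          exact hPdet.mul (Matrix.isUnit_nonsing_inv_det M hMu)
        · rw [one_smul, ← substM_comp, hP, ← hstruct]
          exact (substM_inv_cancel M hMu f).symm
    · -- two independent factors : f ~ x^d + y^d
      set M : Matrix (Fin 2) (Fin 2) ℂ := !![p, s; r, t] with hMdef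
      have hMu : IsUnit M.det := by
        rw [hMdef, Matrix.det_fin_two_of]
        refine isUnit_iff_ne_zero.mpr fun h => hdeg ?_
        linear_combination h
      have keyM : C c * substM M (pderiv 0 (pderiv 0 f))
          + C (e - a) * substM M (pderiv 0 (pderiv 1 f))
          - C b * substM M (pderiv 1 (pderiv 1 f)) = 0 := by
        have h := congrArg (substM M) key
        simpa only [substM_add, substM_sub, substM_mul, substM_C, substM_zero] using h
      have hf01 : pderiv 0 (pderiv 1 (substM M f)) = 0 := by
        rw [pderiv_substM M f 1, map_add, pderiv_C_mul, pderiv_C_mul,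
          pderiv_substM M (pderiv 0 f) 0, pderiv_substM M (pderiv 1 f) 0,
          Grad.pderiv_pderiv 1 0 f,
          show M 0 0 = p from rfl, show M 1 0 = r from rfl,
          show M 0 1 = s from rfl, show M 1 1 = t from rfl]
        simp only [hc, hm, hb, _root_.map_mul, map_add, map_neg] at keyM
        linear_combination keyM
      obtain ⟨A, B, hstruct⟩ : ∃ A B : ℂ, substM M f
          = C A * X 0 ^ d + C B * X 1 ^ d :=
        ⟨_, _, structure_xy (by omega) (substM_isHomogeneous M hf) hf01⟩
      by_cases hA0 : A = 0
      · exfalso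
        apply hprop
        refine pow_case d hd f g hf hg a b c e hab hce M hMu B ?_
        rw [hstruct, hA0]
        simp
      · by_cases hB0 : B = 0
        · exfalso
          apply hprop
          set S : Matrix (Fin 2) (Fin 2) ℂ := !![0, 1; 1, 0] with hSdef
          have hSdet : IsUnit S.det := by
            rw [hSdef, Matrix.det_fin_two_of]
            norm_num
          have hS0 : substM S (X 0) = X 1 := by
            rw [substM_X, Fin.sum_univ_two,
              show S 0 0 = (0:ℂ) from rfl, show S 0 1 = (1:ℂ) from rfl]
            simp
          refine pow_case d hd f g hf hg a b c e hab hce (M * S) ?_ A ?_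
          · rw [Matrix.det_mul]
            exact hMu.mul hSdet
          · rw [← substM_comp, hstruct, hB0, substM_add, substM_mul, substM_mul,
              substM_C, substM_C, substM_pow, substM_pow, hS0]
            simp
        · obtain ⟨z, hz⟩ := IsAlgClosed.exists_pow_nat_eq A (by omega : 0 < d)
          obtain ⟨w0, hw0⟩ := IsAlgClosed.exists_pow_nat_eq B (by omega : 0 < d)
          have hzne : z ≠ 0 := fun h => hA0 (by rw [← hz, h, zero_pow hd0])
          have hwne : w0 ≠ 0 := fun h => hB0 (by rw [← hw0, h, zero_pow hd0])
          set D : Matrix (Fin 2) (Fin 2) ℂ := !![z, 0; 0, w0] with hDdef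
          have hDdet : IsUnit D.det := by
            rw [hDdef, Matrix.det_fin_two_of]
            simpa using isUnit_iff_ne_zero.mpr (mul_ne_zero hzne hwne)
          have hD0 : substM D (X 0) = C z * X 0 := by
            rw [substM_X, Fin.sum_univ_two,
              show D 0 0 = z from rfl, show D 0 1 = (0:ℂ) from rfl]
            simp
          have hD1 : substM D (X 1) = C w0 * X 1 := by
            rw [substM_X, Fin.sum_univ_two,
              show D 1 0 = (0:ℂ) from rfl, show D 1 1 = w0 from rfl]
            simp
          have hDsub : substM D (X 0 ^ d + X 1 ^ d) = C A * X 0 ^ d + C B * X 1 ^ d := by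
            rw [substM_add, substM_pow, substM_pow, hD0, hD1, mul_pow, mul_pow,
              ← _root_.map_pow, ← _root_.map_pow, hz, hw0]
          refine ⟨D * M⁻¹, 1, ?_, one_ne_zero, ?_⟩
          · rw [Matrix.det_mul]
            exact hDdet.mul (Matrix.isUnit_nonsing_inv_det M hMu)
          · rw [one_smul, ← substM_comp, hDsub, ← hstruct]
            exact (substM_inv_cancel M hMu f).symm
end

section
/- Let a₁,…,a_n be nonzero complex numbers, d ≥ 3, and f = a₁x₁^d + ⋯ + a_n x_n^d. Then the associated form of f is A(f)(y₁,…,y_n) = (1/(a₁⋯a_n)) · ((n(d−2))!/(d!)^n) · (y₁⋯y_n)^{d-2}. -/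
open MvPolynomial

noncomputable def hess {n : ℕ} (f : MvPolynomial (Fin n) ℂ) : MvPolynomial (Fin n) ℂ :=
  (Matrix.of fun i j : Fin n => pderiv i (pderiv j f)).det

noncomputable def jacDet {n : ℕ} (f : Fin n → MvPolynomial (Fin n) ℂ) : MvPolynomial (Fin n) ℂ :=
  (Matrix.of fun i j : Fin n => pderiv j (f i)).det

/-- The Jacobian ideal of `f`, generated by its first-order partial derivatives. -/
noncomputable def jacIdeal {n : ℕ} (f : MvPolynomial (Fin n) ℂ) : Ideal (MvPolynomial (Fin n) ℂ) :=
  Ideal.span (Set.range fun i => pderiv i f)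

/-- `Af` is the associated form of a nondegenerate form `f` of degree `d` in `n` variables:
it is homogeneous of degree `n*(d-2)` and satisfies the defining identity
`(y₁x̄₁ + ⋯ + yₙx̄ₙ)^(n(d-2)) = Af(y) ⬝ hess(f)‾` in the Milnor algebra
`M(f) = ℂ[x]/(f_{x₁},…,f_{xₙ})`, for every `y ∈ ℂⁿ`. -/
def IsAssociatedForm (n d : ℕ) (f Af : MvPolynomial (Fin n) ℂ) : Prop :=
  Af.IsHomogeneous (n * (d - 2)) ∧ ∀ y : Fin n → ℂ,
    Ideal.Quotient.mk (jacIdeal f) ((∑ i, C (y i) * X i) ^ (n * (d - 2)))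
      = Ideal.Quotient.mk (jacIdeal f) (C (eval y Af) * hess f)

/-- For `f = a₁x₁^d + ⋯ + aₙxₙ^d` with all `aᵢ ≠ 0` and `d ≥ 3`, the associated form of `f`
is `A(f)(y) = (1/(a₁⋯aₙ)) · ((n(d-2))!/(d!)^n) · (y₁⋯yₙ)^(d-2)`. -/
theorem associatedForm_fermat (n d : ℕ) (hn : 2 ≤ n) (hd : 3 ≤ d)
    (a : Fin n → ℂ) (ha : ∀ i, a i ≠ 0) :
    IsAssociatedForm n d (∑ i, C (a i) * X i ^ d)
      (C ((∏ i, a i)⁻¹ * ((n * (d - 2)).factorial : ℂ) / ((d.factorial : ℂ)) ^ n)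
        * (∏ i, X i) ^ (d - 2)) := by
  obtain ⟨e, rfl⟩ : ∃ e, d = e + 3 := ⟨d - 3, by omega⟩
  have h2 : e + 3 - 2 = e + 1 := rfl
  have h1 : e + 3 - 1 = e + 2 := rfl
  set N := n * (e + 1) with hNdef
  set c₀ : ℂ := (∏ i, a i)⁻¹ * ((n * (e + 3 - 2)).factorial : ℂ) / (((e+3).factorial : ℂ)) ^ n
    with hc₀
  set f : MvPolynomial (Fin n) ℂ := ∑ i, C (a i) * X i ^ (e+3) with hfdef
  have hb : ∀ i : Fin n, (((e+3 : ℕ) : ℂ)) * a i ≠ 0 := fun i =>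
    mul_ne_zero (Nat.cast_ne_zero.mpr (by omega)) (ha i)
  have hpd : ∀ i, pderiv i f = C (((e+3 : ℕ) : ℂ) * a i) * X i ^ (e+2) := by
    intro i
    rw [hfdef, map_sum, Finset.sum_eq_single i]
    · rw [pderiv_C_mul, pderiv_pow, pderiv_X_self, h1, C_mul, map_natCast]
      ring
    · intro j _ hj
      rw [pderiv_C_mul, pderiv_pow, pderiv_X_of_ne hj, mul_zero, mul_zero]
    · simp
  have hJ : jacIdeal f
      = Ideal.span (Set.range fun i : Fin n => (X i : MvPolynomial (Fin n) ℂ) ^ (e+2)) := by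
    apply le_antisymm
    · rw [jacIdeal, Ideal.span_le]
      rintro - ⟨i, rfl⟩
      show (pderiv i f : MvPolynomial (Fin n) ℂ) ∈ _
      rw [hpd i]
      exact Ideal.mul_mem_left _ _ (Ideal.subset_span ⟨i, rfl⟩)
    · rw [Ideal.span_le]
      rintro - ⟨i, rfl⟩
      show ((X i : MvPolynomial (Fin n) ℂ) ^ (e+2) : MvPolynomial (Fin n) ℂ) ∈ _
      have hx : (X i : MvPolynomial (Fin n) ℂ) ^ (e+2)
          = C ((((e+3 : ℕ) : ℂ)) * a i)⁻¹ * pderiv i f := by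
        rw [hpd i, ← mul_assoc, ← C_mul, inv_mul_cancel₀ (hb i), C_1, one_mul]
      rw [hx]
      exact Ideal.mul_mem_left _ _ (Ideal.subset_span ⟨i, rfl⟩)
  have hhess : hess f
      = C ((∏ i, a i) * (((e+3 : ℕ) : ℂ) * ((e+2 : ℕ) : ℂ)) ^ n) * ∏ i, X i ^ (e+1) := by
    have hentry : (Matrix.of fun i j : Fin n => pderiv i (pderiv j f))
        = Matrix.diagonal (fun i =>
            C (((e+3 : ℕ) : ℂ) * ((e+2 : ℕ) : ℂ) * a i) * X i ^ (e+1)) := by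
      refine Matrix.ext fun i j => ?_
      by_cases hij : i = j
      · subst hij
        rw [Matrix.of_apply, Matrix.diagonal_apply_eq, hpd i, pderiv_C_mul, pderiv_pow,
          pderiv_X_self, mul_one, show e + 2 - 1 = e + 1 from rfl]
        simp only [C_mul, map_natCast]
        ring
      · rw [Matrix.of_apply, Matrix.diagonal_apply_ne' _ fun h => hij h.symm, hpd j,
          pderiv_C_mul, pderiv_pow, pderiv_X_of_ne (fun h => hij h.symm), mul_zero, mul_zero]
    rw [hess, hentry, Matrix.det_diagonal, Finset.prod_mul_distrib, ← map_prod,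
      Finset.prod_mul_distrib, Finset.prod_const, Finset.card_univ, Fintype.card_fin]
    congr 2
    ring
  constructor
  · rw [h2]
    have hX : ((∏ i, (X i : MvPolynomial (Fin n) ℂ)) ^ (e+1)).IsHomogeneous (n * (e+1)) := by
      have hp : (∏ i, (X i : MvPolynomial (Fin n) ℂ)).IsHomogeneous n := by
        have := IsHomogeneous.prod Finset.univ (fun i => (X i : MvPolynomial (Fin n) ℂ))
          (fun _ => 1) (fun i _ => isHomogeneous_X _ _)
        simpa using this
      exact hp.pow (e+1)
    simpa [hc₀, h2] using (isHomogeneous_C _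
      ((∏ i, a i)⁻¹ * ((n * (e+1)).factorial : ℂ) / (((e+3).factorial : ℂ)) ^ n)).mul hX
  · intro y
    rw [h2, Ideal.Quotient.eq, hJ]
    set k₀ : Fin n → ℕ := fun _ => e + 1 with hk₀def
    have hk₀ : k₀ ∈ Finset.piAntidiag Finset.univ N := by
      simp [Finset.mem_piAntidiag, hk₀def, Finset.sum_const, mul_comm, hNdef]
    have hexp : (∑ i, C (y i) * X i : MvPolynomial (Fin n) ℂ) ^ N
        = ∑ k ∈ Finset.piAntidiag Finset.univ N,
            (Nat.multinomial Finset.univ k : MvPolynomial (Fin n) ℂ)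
              * ∏ i, (C (y i) * X i) ^ k i :=
      Finset.sum_pow_eq_sum_piAntidiag _ _ _
    -- the main term equals the right-hand side
    have hmain : C (eval y (C c₀ * (∏ i, X i) ^ (e+1))) * hess f
        = (Nat.multinomial Finset.univ k₀ : MvPolynomial (Fin n) ℂ)
            * ∏ i, (C (y i) * X i) ^ k₀ i := by
      have heval : eval y (C c₀ * (∏ i, X i : MvPolynomial (Fin n) ℂ) ^ (e+1))
          = c₀ * ∏ i, (y i) ^ (e+1) := by
        simp [eval_prod, Finset.prod_pow]
      have hms : (((e+1).factorial : ℂ)) ^ n * (Nat.multinomial Finset.univ k₀ : ℂ)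
          = (N.factorial : ℂ) := by
        have := Nat.multinomial_spec Finset.univ k₀
        have hsum : ∑ i : Fin n, k₀ i = N := by
          simp [hk₀def, Finset.sum_const, mul_comm, hNdef]
        rw [hsum] at this
        calc (((e+1).factorial : ℂ)) ^ n * (Nat.multinomial Finset.univ k₀ : ℂ)
            = (((∏ i : Fin n, (k₀ i).factorial) * Nat.multinomial Finset.univ k₀ : ℕ) : ℂ) := by
              push_cast [hk₀def, Finset.prod_const, Finset.card_univ, Fintype.card_fin]; ring
          _ = (N.factorial : ℂ) := by rw [this]
      have hfact : (((e+3).factorial : ℂ))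
          = ((e+3 : ℕ) : ℂ) * ((e+2 : ℕ) : ℂ) * (((e+1).factorial : ℂ)) := by
        push_cast [show e + 3 = (e+1) + 2 from rfl, Nat.factorial_succ]
        ring
      have hprodne : (∏ i, a i) ≠ 0 := Finset.prod_ne_zero_iff.mpr fun i _ => ha i
      have hfac1 : (((e+1).factorial : ℂ)) ≠ 0 := Nat.cast_ne_zero.mpr (e+1).factorial_ne_zero
      have hC : (c₀ * ∏ i, (y i) ^ (e+1))
            * ((∏ i, a i) * (((e+3 : ℕ) : ℂ) * ((e+2 : ℕ) : ℂ)) ^ n)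
          = (Nat.multinomial Finset.univ k₀ : ℂ) * ∏ i, (y i) ^ (e+1) := by
        have hq3 : ((e+3 : ℕ) : ℂ) ≠ 0 := Nat.cast_ne_zero.mpr (by omega)
        have hq2 : ((e+2 : ℕ) : ℂ) ≠ 0 := Nat.cast_ne_zero.mpr (by omega)
        have key : ∀ Q FF M PP AA : ℂ, Q ≠ 0 → FF ≠ 0 → AA ≠ 0 →
            AA⁻¹ * (FF * M) / (Q * FF) * PP * (AA * Q) = M * PP := by
          intro Q FF M PP AA hQ hFF hAA
          field_simp
        rw [hc₀, h2, ← hNdef, ← hms, hfact, mul_pow]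
        exact key _ _ _ _ _ (pow_ne_zero _ (mul_ne_zero hq3 hq2)) (pow_ne_zero _ hfac1) hprodne
      rw [heval, hhess, ← mul_assoc, ← C_mul, hC, hk₀def]
      simp only [mul_pow, Finset.prod_mul_distrib, ← map_pow, ← map_prod]
      rw [C_mul, map_natCast]
      ring
    rw [hexp, ← Finset.add_sum_erase _ _ hk₀, hmain, add_sub_cancel_left]
    refine Ideal.sum_mem _ fun k hk => ?_
    obtain ⟨hkne, hkmem⟩ := Finset.mem_erase.mp hk
    have hksum : ∑ i : Fin n, k i = N := ((Finset.mem_piAntidiag.mp hkmem).1)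
    have hbig : ∃ i, e + 2 ≤ k i := by
      by_contra hcon
      push_neg at hcon
      apply hkne
      funext i
      have hle : ∀ j ∈ Finset.univ, k j ≤ k₀ j := fun j _ => by
        have := hcon j; simp only [hk₀def]; omega
      have hsum : ∑ j : Fin n, k j = ∑ j : Fin n, k₀ j := by
        rw [hksum]; simp [hk₀def, Finset.sum_const, mul_comm, hNdef]
      exact (Finset.sum_eq_sum_iff_of_le hle).mp hsum i (Finset.mem_univ i)
    obtain ⟨i, hi⟩ := hbig
    have hdvd : (X i : MvPolynomial (Fin n) ℂ) ^ (e+2)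
        ∣ (Nat.multinomial Finset.univ k : MvPolynomial (Fin n) ℂ)
            * ∏ j, (C (y j) * X j) ^ k j := by
      refine dvd_mul_of_dvd_right (dvd_trans ?_ (Finset.dvd_prod_of_mem _ (Finset.mem_univ i))) _
      rw [mul_pow]
      exact dvd_mul_of_dvd_right (pow_dvd_pow _ hi) _
    obtain ⟨c, hc⟩ := hdvd
    rw [hc]
    exact Ideal.mul_mem_right _ _ (Ideal.subset_span ⟨i, rfl⟩)
end
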